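/- arXiv:2307.04631 — 2 statements merged into one kernel-verified Lean document; each statement's English description precedes it below -/
import Mathlib

section
/- Let w, v ∈ S_n and let i ∈ {1,…,n−1} be such that v ⪯ w in Bruhat order, i ∉ supp(v), supp(w) = supp(v) ∪ {i}, and B(w) is order-isomorphic to C₂ × B(v) with the componentwise order. Then i is unconfined in every reduced word of w. -/
/-- The adjacent transposition `σ_i`, swapping `i` and `i+1` (acting on `ℕ`). -/
def sigmaT (i : ℕ) : Equiv.Perm ℕ := Equiv.swap i (i + 1)

/-- The permutation given by a word (product of simple reflections, composed as functions). -/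
def wordProd (s : List ℕ) : Equiv.Perm ℕ := (s.map sigmaT).prod

/-- `s` is a word for `w` in `S_n`: all letters lie in `{1,…,n-1}` and the product is `w`. -/
def IsWord (n : ℕ) (w : Equiv.Perm ℕ) (s : List ℕ) : Prop :=
  (∀ j ∈ s, 1 ≤ j ∧ j ≤ n - 1) ∧ wordProd s = w

/-- `s` is a reduced word for `w`: a word of minimal length. -/
def IsReducedWord (n : ℕ) (w : Equiv.Perm ℕ) (s : List ℕ) : Prop :=
  IsWord n w s ∧ ∀ t : List ℕ, IsWord n w t → s.length ≤ t.length

/-- The Coxeter length `ℓ(w)`. -/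
noncomputable def ell (n : ℕ) (w : Equiv.Perm ℕ) : ℕ :=
  sInf {k | ∃ s : List ℕ, IsWord n w s ∧ s.length = k}

/-- The support of `w`: letters appearing in reduced words of `w`. -/
def supp (n : ℕ) (w : Equiv.Perm ℕ) : Set ℕ :=
  {i | ∃ s : List ℕ, IsReducedWord n w s ∧ i ∈ s}

/-- Bruhat order: some reduced word of `v` is a subsequence of some reduced word of `w`. -/
def BruhatLE (n : ℕ) (v w : Equiv.Perm ℕ) : Prop :=
  ∃ s t : List ℕ, IsReducedWord n v s ∧ IsReducedWord n w t ∧ s.Sublist t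

/-- The principal order ideal `B(w)`, as a type. -/
def IdealB (n : ℕ) (w : Equiv.Perm ℕ) : Type := {v : Equiv.Perm ℕ // BruhatLE n v w}

/-- The Bruhat order restricted to `B(w)`. -/
def IdealLE (n : ℕ) (w : Equiv.Perm ℕ) (a b : IdealB n w) : Prop := BruhatLE n a.1 b.1

/-- Two relations are isomorphic (order isomorphism of the corresponding ordered sets). -/
def RelIsomorphic {α β : Type*} (ra : α → α → Prop) (rb : β → β → Prop) : Prop :=
  ∃ e : α ≃ β, ∀ a b : α, ra a b ↔ rb (e a) (e b)

/-- `w` is a prism: `B(w) ≅ C₂ × X` for some partially ordered set `X`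
(the two-element chain `C₂` realized as `Bool`), with the componentwise order. -/
def IsPrism (n : ℕ) (w : Equiv.Perm ℕ) : Prop :=
  ∃ (X : Type) (rX : X → X → Prop), IsPartialOrder X rX ∧
    RelIsomorphic (IdealLE n w)
      (fun p q : Bool × X => (p.1 ≤ q.1) ∧ rX p.2 q.2)

/-- `w` belongs to `S_n`: it fixes every point outside `{1,…,n}`. -/
def MemSymm (n : ℕ) (w : Equiv.Perm ℕ) : Prop :=
  ∀ x : ℕ, x ∉ Set.Icc 1 n → w x = x

/-- `i` is unconfined in the word `s`: it appears exactly once, not between two copies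
of `i+1` and not between two copies of `i-1`. -/
def Unconfined (i : ℕ) (s : List ℕ) : Prop :=
  s.count i = 1 ∧ ∀ a b : List ℕ, s = a ++ i :: b →
    ¬((i + 1) ∈ a ∧ (i + 1) ∈ b) ∧ ¬((i - 1) ∈ a ∧ (i - 1) ∈ b)

/-- `B(w) ≅ C₂ × B(v)` with the componentwise order. -/
def IsoC2TimesIdeal (n : ℕ) (w v : Equiv.Perm ℕ) : Prop :=
  RelIsomorphic (IdealLE n w)
    (fun p q : Bool × IdealB n v => (p.1 ≤ q.1) ∧ IdealLE n v p.2 q.2)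

namespace NCfix

lemma sig_apply (j x : ℕ) : sigmaT j x = if x = j then j+1 else if x = j+1 then j else x := by
  simp [sigmaT, Equiv.swap_apply_def]

lemma sig_sq (j : ℕ) : sigmaT j * sigmaT j = 1 := Equiv.swap_mul_self _ _

@[simp] lemma wordProd_nil : wordProd [] = 1 := rfl

lemma wordProd_cons (j : ℕ) (s : List ℕ) : wordProd (j :: s) = sigmaT j * wordProd s := by
  simp [wordProd]

lemma wordProd_append (s t : List ℕ) : wordProd (s ++ t) = wordProd s * wordProd t := by
  simp [wordProd]

lemma wordProd_concat (s : List ℕ) (j : ℕ) : wordProd (s ++ [j]) = wordProd s * sigmaT j := by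
  simp [wordProd]

lemma wordProd_singleton (j : ℕ) : wordProd [j] = sigmaT j := by
  simp [wordProd]

/-- letters constraint -/
def Lt (n : ℕ) (s : List ℕ) : Prop := ∀ j ∈ s, 1 ≤ j ∧ j ≤ n - 1

lemma sig_fix {n j x : ℕ} (h1 : 1 ≤ j) (h2 : j ≤ n - 1) (hx : x ∉ Finset.Icc 1 n) :
    sigmaT j x = x := by
  simp only [Finset.mem_Icc, not_and, not_le] at hx
  rw [sig_apply]
  split_ifs with h h' <;> omega

lemma sig_mem {n j x : ℕ} (h1 : 1 ≤ j) (h2 : j ≤ n - 1) (hx : x ∈ Finset.Icc 1 n) :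
    sigmaT j x ∈ Finset.Icc 1 n := by
  simp only [Finset.mem_Icc] at hx ⊢
  rw [sig_apply]
  split_ifs with h h' <;> omega

lemma wp_fix {n : ℕ} {s : List ℕ} (h : Lt n s) {x : ℕ} (hx : x ∉ Finset.Icc 1 n) :
    wordProd s x = x := by
  induction s with
  | nil => rfl
  | cons j t ih =>
    have hj := h j (by simp)
    have ht : Lt n t := fun a ha => h a (by simp [ha])
    rw [wordProd_cons, Equiv.Perm.mul_apply, ih ht, sig_fix hj.1 hj.2 hx]

lemma wp_mem {n : ℕ} {s : List ℕ} (h : Lt n s) {x : ℕ} (hx : x ∈ Finset.Icc 1 n) :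
    wordProd s x ∈ Finset.Icc 1 n := by
  induction s with
  | nil => simpa using hx
  | cons j t ih =>
    have hj := h j (by simp)
    have ht : Lt n t := fun a ha => h a (by simp [ha])
    rw [wordProd_cons, Equiv.Perm.mul_apply]
    exact sig_mem hj.1 hj.2 (ih ht)

lemma memsymm_of_word {n : ℕ} {s : List ℕ} (h : Lt n s) : MemSymm n (wordProd s) := by
  intro x hx
  apply wp_fix h
  simpa [Finset.mem_Icc, Set.mem_Icc] using hx

end NCfix
namespace NCfix

def InvSet (n : ℕ) (g : Equiv.Perm ℕ) : Finset (ℕ × ℕ) :=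
  (Finset.Icc 1 n ×ˢ Finset.Icc 1 n).filter (fun p => p.1 < p.2 ∧ g p.2 < g p.1)

def coxInv (n : ℕ) (g : Equiv.Perm ℕ) : ℕ := (InvSet n g).card

lemma mem_InvSet {n : ℕ} {g : Equiv.Perm ℕ} {x y : ℕ} :
    (x,y) ∈ InvSet n g ↔ x ∈ Finset.Icc 1 n ∧ y ∈ Finset.Icc 1 n ∧ x < y ∧ g y < g x := by
  simp only [InvSet, Finset.mem_filter, Finset.mem_product]
  tauto

lemma coxInv_one (n : ℕ) : coxInv n 1 = 0 := by
  have : InvSet n 1 = ∅ := by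
    ext ⟨x,y⟩
    simp only [mem_InvSet, Finset.notMem_empty, iff_false, not_and]
    intro _ _ hxy
    simp only [Equiv.Perm.coe_one, id_eq]
    omega
  simp [coxInv, this]

@[simp] lemma sig_at (j : ℕ) : sigmaT j j = j + 1 := by
  rw [sig_apply]; simp

@[simp] lemma sig_at' (j : ℕ) : sigmaT j (j+1) = j := by
  rw [sig_apply]; split_ifs <;> omega

lemma swap_pair_lt {j x y : ℕ} (hxy : x < y) (hne : ¬(x = j ∧ y = j+1)) :
    sigmaT j x < sigmaT j y := by
  rw [sig_apply, sig_apply]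
  split_ifs <;> omega

lemma card_le_erase_add_one {α : Type*} [DecidableEq α] (s : Finset α) (a : α) :
    s.card ≤ (s.erase a).card + 1 := by
  have h1 : s ⊆ insert a (s.erase a) := Finset.subset_insert_iff.mpr (le_refl _)
  calc s.card ≤ (insert a (s.erase a)).card := Finset.card_le_card h1
    _ ≤ (s.erase a).card + 1 := Finset.card_insert_le _ _

lemma swap_invol (j : ℕ) (x : ℕ) : sigmaT j (sigmaT j x) = x := by
  rw [sig_apply, sig_apply]; split_ifs <;> omega

lemma coxInv_mul_asc_le {n : ℕ} {g : Equiv.Perm ℕ} {j : ℕ} (hj1 : 1 ≤ j) (hj2 : j ≤ n-1) :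
    coxInv n (g * sigmaT j) ≤ coxInv n g + 1 := by
  have key : ((InvSet n (g * sigmaT j)).erase (j, j+1)).card ≤ (InvSet n g).card := by
    apply Finset.card_le_card_of_injOn (fun p => (sigmaT j p.1, sigmaT j p.2))
    · intro ⟨x, y⟩ hp
      have hne := (Finset.mem_erase.mp hp).1
      have hmem := mem_InvSet.mp (Finset.mem_erase.mp hp).2
      obtain ⟨hx, hy, hxy, hinv⟩ := hmem
      rw [Equiv.Perm.mul_apply, Equiv.Perm.mul_apply] at hinv
      refine mem_InvSet.mpr ⟨sig_mem hj1 hj2 hx, sig_mem hj1 hj2 hy, ?_, hinv⟩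
      apply swap_pair_lt hxy
      intro ⟨h1, h2⟩
      exact hne (by simp [h1, h2])
    · intro p _ q _ hpq
      have h1 := congrArg Prod.fst hpq
      have h2 := congrArg Prod.snd hpq
      simp only at h1 h2
      have e1 : p.1 = q.1 := by
        have := congrArg (sigmaT j) h1; rwa [swap_invol, swap_invol] at this
      have e2 : p.2 = q.2 := by
        have := congrArg (sigmaT j) h2; rwa [swap_invol, swap_invol] at this
      exact Prod.ext e1 e2
  calc coxInv n (g * sigmaT j)
      ≤ ((InvSet n (g * sigmaT j)).erase (j, j+1)).card + 1 := card_le_erase_add_one _ _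
    _ ≤ coxInv n g + 1 := by exact Nat.add_le_add_right key 1

lemma coxInv_mul_desc_le {n : ℕ} {g : Equiv.Perm ℕ} {j : ℕ} (hj1 : 1 ≤ j) (hj2 : j ≤ n-1)
    (h : g (j+1) < g j) :
    coxInv n (g * sigmaT j) + 1 ≤ coxInv n g := by
  have hjn : j + 1 ≤ n := by omega
  have hmem : (j, j+1) ∈ InvSet n g :=
    mem_InvSet.mpr ⟨by simp [Finset.mem_Icc]; omega, by simp [Finset.mem_Icc]; omega, by omega, h⟩
  have key : (InvSet n (g * sigmaT j)).card ≤ ((InvSet n g).erase (j, j+1)).card := by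
    apply Finset.card_le_card_of_injOn (fun p => (sigmaT j p.1, sigmaT j p.2))
    · intro ⟨x, y⟩ hp
      have hmem' := mem_InvSet.mp hp
      obtain ⟨hx, hy, hxy, hinv⟩ := hmem'
      rw [Equiv.Perm.mul_apply, Equiv.Perm.mul_apply] at hinv
      have hpne : ¬(x = j ∧ y = j+1) := by
        intro ⟨h1, h2⟩
        subst h1; subst h2
        rw [sig_at, sig_at'] at hinv
        omega
      refine Finset.mem_erase.mpr ⟨?_, mem_InvSet.mpr
        ⟨sig_mem hj1 hj2 hx, sig_mem hj1 hj2 hy, swap_pair_lt hxy hpne, hinv⟩⟩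
      intro hEq
      have e1 : sigmaT j x = j := congrArg Prod.fst hEq
      have e2 : sigmaT j y = j + 1 := congrArg Prod.snd hEq
      have ex : x = j + 1 := by
        have := congrArg (sigmaT j) e1
        rw [swap_invol, sig_at] at this; omega
      have ey : y = j := by
        have := congrArg (sigmaT j) e2
        rw [swap_invol, sig_at'] at this; omega
      omega
    · intro p _ q _ hpq
      have h1 := congrArg Prod.fst hpq
      have h2 := congrArg Prod.snd hpq
      simp only at h1 h2
      have e1 : p.1 = q.1 := by
        have := congrArg (sigmaT j) h1; rwa [swap_invol, swap_invol] at this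
      have e2 : p.2 = q.2 := by
        have := congrArg (sigmaT j) h2; rwa [swap_invol, swap_invol] at this
      exact Prod.ext e1 e2
  calc coxInv n (g * sigmaT j) + 1 ≤ ((InvSet n g).erase (j, j+1)).card + 1 :=
        Nat.add_le_add_right key 1
    _ = coxInv n g := Finset.card_erase_add_one hmem

lemma coxInv_asc {n : ℕ} {g : Equiv.Perm ℕ} {j : ℕ} (hj1 : 1 ≤ j) (hj2 : j ≤ n-1)
    (h : g j < g (j+1)) : coxInv n (g * sigmaT j) = coxInv n g + 1 := by
  have h1 := coxInv_mul_asc_le (n := n) (g := g) hj1 hj2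
  have hd : (g * sigmaT j) ((j:ℕ)+1) < (g * sigmaT j) j := by
    rw [Equiv.Perm.mul_apply, Equiv.Perm.mul_apply, sig_at, sig_at']
    exact h
  have h2 := coxInv_mul_desc_le (n := n) (g := g * sigmaT j) hj1 hj2 hd
  rw [mul_assoc, sig_sq, mul_one] at h2
  omega

lemma coxInv_desc {n : ℕ} {g : Equiv.Perm ℕ} {j : ℕ} (hj1 : 1 ≤ j) (hj2 : j ≤ n-1)
    (h : g (j+1) < g j) : coxInv n g = coxInv n (g * sigmaT j) + 1 := by
  have h2 := coxInv_mul_desc_le (n := n) (g := g) hj1 hj2 h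
  have ha : (g * sigmaT j) j < (g * sigmaT j) (j+1) := by
    rw [Equiv.Perm.mul_apply, Equiv.Perm.mul_apply, sig_at, sig_at']
    exact h
  have h1 := coxInv_mul_asc_le (n := n) (g := g * sigmaT j) hj1 hj2
  rw [mul_assoc, sig_sq, mul_one] at h1
  omega

end NCfix
namespace NCfix

lemma coxInv_word_le {n : ℕ} {s : List ℕ} (h : Lt n s) : coxInv n (wordProd s) ≤ s.length := by
  induction s using List.reverseRecOn with
  | nil => simp [coxInv_one]
  | append_singleton t b ih =>
    have ht : Lt n t := fun a ha => h a (by simp [ha])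
    have hb := h b (by simp)
    rw [wordProd_concat]
    calc coxInv n (wordProd t * sigmaT b) ≤ coxInv n (wordProd t) + 1 :=
          coxInv_mul_asc_le hb.1 hb.2
      _ ≤ t.length + 1 := Nat.add_le_add_right (ih ht) 1
      _ = (t ++ [b]).length := by simp

lemma exists_descent {n : ℕ} {s : List ℕ} (h : Lt n s) (hne : wordProd s ≠ 1) :
    ∃ j, 1 ≤ j ∧ j ≤ n - 1 ∧ (wordProd s) (j+1) < (wordProd s) j := by
  set g := wordProd s with hg
  by_contra hcon
  push_neg at hcon
  have hasc : ∀ j, 1 ≤ j → j ≤ n - 1 → g j < g (j+1) := by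
    intro j h1 h2
    have hne' : g j ≠ g (j+1) := fun hEq => by
      have := g.injective hEq; omega
    have := hcon j h1 h2
    omega
  have hmemg : ∀ x, x ∈ Finset.Icc 1 n → g x ∈ Finset.Icc 1 n := fun x hx => wp_mem h hx
  have hge : ∀ x, 1 ≤ x → x ≤ n → x ≤ g x := by
    intro x
    induction x with
    | zero => omega
    | succ x ih =>
      intro _ hxn
      rcases Nat.eq_or_lt_of_le (show 1 ≤ x + 1 by omega) with h1 | h1
      · have := hmemg (x+1) (by simp [Finset.mem_Icc]; omega)
        simp [Finset.mem_Icc] at this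
        omega
      · have hx1 : 1 ≤ x := by omega
        have hxle : x ≤ g x := ih hx1 (by omega)
        have : g x < g (x+1) := hasc x hx1 (by omega)
        omega
  have hle : ∀ d x, 1 ≤ x → x ≤ n → n - x = d → g x ≤ x := by
    intro d
    induction d with
    | zero =>
      intro x h1 h2 h3
      have hx : x = n := by omega
      subst hx
      have := hmemg x (by simp [Finset.mem_Icc]; omega)
      simp [Finset.mem_Icc] at this
      omega
    | succ d ih =>
      intro x h1 h2 h3
      have : g x < g (x+1) := hasc x h1 (by omega)
      have := ih (x+1) (by omega) (by omega) (by omega)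
      omega
  apply hne
  ext x
  simp only [Equiv.Perm.coe_one, id_eq]
  by_cases hx : x ∈ Finset.Icc 1 n
  · simp only [Finset.mem_Icc] at hx
    have := hge x hx.1 hx.2
    have := hle (n - x) x hx.1 hx.2 rfl
    omega
  · exact wp_fix h hx

lemma exists_min_word {n : ℕ} :
    ∀ k (g : Equiv.Perm ℕ), (∃ s, Lt n s ∧ wordProd s = g) → coxInv n g ≤ k →
    ∃ r, Lt n r ∧ wordProd r = g ∧ r.length = coxInv n g := by
  intro k
  induction k with
  | zero =>
    intro g ⟨s, hs, hgs⟩ hk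
    by_cases hg : g = 1
    · exact ⟨[], fun j hj => by simp at hj, by simp [hg], by simp [hg, coxInv_one]⟩
    · obtain ⟨j, hj1, hj2, hdesc⟩ := exists_descent hs (hgs ▸ hg)
      rw [hgs] at hdesc
      have := coxInv_desc hj1 hj2 hdesc
      omega
  | succ k ih =>
    intro g ⟨s, hs, hgs⟩ hk
    by_cases hg : g = 1
    · exact ⟨[], fun j hj => by simp at hj, by simp [hg], by simp [hg, coxInv_one]⟩
    · obtain ⟨j, hj1, hj2, hdesc⟩ := exists_descent hs (hgs ▸ hg)
      rw [hgs] at hdesc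
      have hstep := coxInv_desc hj1 hj2 hdesc
      have hword' : ∃ s', Lt n s' ∧ wordProd s' = g * sigmaT j := by
        refine ⟨s ++ [j], ?_, by rw [wordProd_concat, hgs]⟩
        intro a ha
        rcases List.mem_append.mp ha with h | h
        · exact hs a h
        · simp at h; subst h; exact ⟨hj1, hj2⟩
      obtain ⟨r, hr, hrprod, hrlen⟩ := ih (g * sigmaT j) hword' (by omega)
      refine ⟨r ++ [j], ?_, ?_, ?_⟩
      · intro a ha
        rcases List.mem_append.mp ha with h | h
        · exact hr a h
        · simp at h; subst h; exact ⟨hj1, hj2⟩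
      · rw [wordProd_concat, hrprod, mul_assoc, sig_sq, mul_one]
      · simp [hrlen]; omega

lemma isword_lt {n : ℕ} {w : Equiv.Perm ℕ} {s : List ℕ} (h : IsWord n w s) : Lt n s := h.1

lemma reduced_iff_len {n : ℕ} {w : Equiv.Perm ℕ} {s : List ℕ} (hw : IsWord n w s) :
    IsReducedWord n w s ↔ s.length = coxInv n w := by
  constructor
  · intro hred
    obtain ⟨r, hr, hrprod, hrlen⟩ :=
      exists_min_word (coxInv n w) w ⟨s, hw.1, hw.2⟩ (le_refl _)
    have h1 : s.length ≤ r.length := hred.2 r ⟨hr, hrprod⟩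
    have h2 : coxInv n w ≤ s.length := by
      have := coxInv_word_le hw.1; rw [hw.2] at this; exact this
    omega
  · intro hlen
    refine ⟨hw, fun t ht => ?_⟩
    have := coxInv_word_le ht.1
    rw [ht.2] at this
    omega

lemma reduced_len {n : ℕ} {w : Equiv.Perm ℕ} {s : List ℕ} (h : IsReducedWord n w s) :
    s.length = coxInv n w := (reduced_iff_len h.1).mp h

lemma reduced_concat_split {n : ℕ} {w : Equiv.Perm ℕ} {t : List ℕ} {b : ℕ}
    (h : IsReducedWord n w (t ++ [b])) :
    IsReducedWord n (wordProd t) t ∧ (wordProd t) b < (wordProd t) (b+1) ∧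
      w = wordProd t * sigmaT b ∧ coxInv n w = coxInv n (wordProd t) + 1 := by
  have hb := h.1.1 b (by simp)
  have ht : Lt n t := fun a ha => h.1.1 a (by simp [ha])
  have hwprod : w = wordProd t * sigmaT b := by rw [← h.1.2, wordProd_concat]
  have hlen : t.length + 1 = coxInv n w := by
    have h1 := reduced_len h
    simpa using h1
  have hneq : (wordProd t) b ≠ (wordProd t) (b+1) := fun hEq => by
    have := (wordProd t).injective hEq; omega
  have hgle : coxInv n (wordProd t) ≤ t.length := coxInv_word_le ht
  rcases lt_or_gt_of_ne hneq with hasc | hdesc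
  · have hstep : coxInv n w = coxInv n (wordProd t) + 1 := by
      rw [hwprod]; exact coxInv_asc hb.1 hb.2 hasc
    have hred : IsReducedWord n (wordProd t) t := by
      rw [reduced_iff_len ⟨ht, rfl⟩]
      omega
    exact ⟨hred, hasc, hwprod, hstep⟩
  · exfalso
    have hstep : coxInv n (wordProd t) = coxInv n w + 1 := by
      rw [hwprod]; exact coxInv_desc hb.1 hb.2 hdesc
    omega

lemma reduced_take {n : ℕ} {w : Equiv.Perm ℕ} {t : List ℕ} (h : IsReducedWord n w t) (j : ℕ) :
    IsReducedWord n (wordProd (t.take j)) (t.take j) := by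
  induction t using List.reverseRecOn generalizing w j with
  | nil => simpa using ⟨⟨fun a ha => by simp at ha, rfl⟩, fun t' ht' => by simp⟩
  | append_singleton t b ih =>
    by_cases hj : j ≤ t.length
    · rw [List.take_append_of_le_length hj]
      exact ih (reduced_concat_split h).1 j
    · rw [List.take_of_length_le (by simp; omega)]
      rw [h.1.2]
      exact h

end NCfix
namespace NCfix

def Rk (g : Equiv.Perm ℕ) (p q : ℕ) : ℕ := ((Finset.Icc 1 p).filter (fun x => q ≤ g x)).card

def Ehr (a b : Equiv.Perm ℕ) : Prop := ∀ p q, Rk a p q ≤ Rk b p q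

lemma Ehr_refl (a : Equiv.Perm ℕ) : Ehr a a := fun _ _ => le_refl _

lemma Ehr_trans {a b c : Equiv.Perm ℕ} (h1 : Ehr a b) (h2 : Ehr b c) : Ehr a c :=
  fun p q => le_trans (h1 p q) (h2 p q)

lemma Rk_succ (g : Equiv.Perm ℕ) (p q : ℕ) (hp : 1 ≤ p) :
    Rk g p q = Rk g (p-1) q + (if q ≤ g p then 1 else 0) := by
  have hIcc : Finset.Icc 1 p = insert p (Finset.Icc 1 (p-1)) := by
    ext x; simp [Finset.mem_Icc, Finset.mem_insert]; omega
  rw [Rk, hIcc, Finset.filter_insert]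
  split_ifs with h
  · rw [Finset.card_insert_of_notMem (by simp [Finset.mem_Icc]; omega)]
    rfl
  · simp [Rk]

lemma Rk_mul_swap_low {g : Equiv.Perm ℕ} {j p : ℕ} (hpj : p < j) (q : ℕ) :
    Rk (g * sigmaT j) p q = Rk g p q := by
  unfold Rk
  apply Finset.card_bij (fun x _ => x) ?_ (fun a b _ _ h => h) ?_
  · intro x hx
    simp only [Finset.mem_filter, Finset.mem_Icc] at hx ⊢
    have : sigmaT j x = x := by rw [sig_apply]; split_ifs <;> omega
    rw [Equiv.Perm.mul_apply, this] at hx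
    exact hx
  · intro x hx
    simp only [Finset.mem_filter, Finset.mem_Icc] at hx
    refine ⟨x, ?_, rfl⟩
    simp only [Finset.mem_filter, Finset.mem_Icc]
    have : sigmaT j x = x := by rw [sig_apply]; split_ifs <;> omega
    rw [Equiv.Perm.mul_apply, this]
    exact hx

lemma Rk_mul_swap_high {g : Equiv.Perm ℕ} {j p : ℕ} (hj : 1 ≤ j) (hpj : j < p) (q : ℕ) :
    Rk (g * sigmaT j) p q = Rk g p q := by
  unfold Rk
  apply Finset.card_bij (fun x _ => sigmaT j x) ?_ ?_ ?_
  · intro x hx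
    simp only [Finset.mem_filter, Finset.mem_Icc] at hx ⊢
    rw [Equiv.Perm.mul_apply] at hx
    refine ⟨?_, hx.2⟩
    rw [sig_apply]; split_ifs <;> omega
  · intro a b ha hb h
    have := congrArg (sigmaT j) h
    rwa [swap_invol, swap_invol] at this
  · intro x hx
    simp only [Finset.mem_filter, Finset.mem_Icc] at hx
    refine ⟨sigmaT j x, ?_, swap_invol j x⟩
    simp only [Finset.mem_filter, Finset.mem_Icc]
    constructor
    · rw [sig_apply]; split_ifs <;> omega
    · rw [Equiv.Perm.mul_apply, swap_invol]
      exact hx.2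

lemma Rk_mul_swap_row {g : Equiv.Perm ℕ} {j : ℕ} (hj : 1 ≤ j) (q : ℕ) :
    Rk (g * sigmaT j) j q = Rk g (j-1) q + (if q ≤ g (j+1) then 1 else 0) := by
  rw [Rk_succ _ j q hj]
  congr 1
  · unfold Rk
    apply Finset.card_bij (fun x _ => x) ?_ (fun a b _ _ h => h) ?_
    · intro x hx
      simp only [Finset.mem_filter, Finset.mem_Icc] at hx ⊢
      have : sigmaT j x = x := by rw [sig_apply]; split_ifs <;> omega
      rw [Equiv.Perm.mul_apply, this] at hx
      exact hx
    · intro x hx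
      simp only [Finset.mem_filter, Finset.mem_Icc] at hx
      refine ⟨x, ?_, rfl⟩
      simp only [Finset.mem_filter, Finset.mem_Icc]
      have : sigmaT j x = x := by rw [sig_apply]; split_ifs <;> omega
      rw [Equiv.Perm.mul_apply, this]
      exact hx
  · rw [Equiv.Perm.mul_apply, sig_at]

lemma Rk_expand2 {g : Equiv.Perm ℕ} {j : ℕ} (hj : 1 ≤ j) (q : ℕ) :
    Rk g (j+1) q = Rk g (j-1) q + (if q ≤ g j then 1 else 0) + (if q ≤ g (j+1) then 1 else 0) := by
  rw [Rk_succ _ (j+1) q (by omega)]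
  have : j + 1 - 1 = j := by omega
  rw [this, Rk_succ _ j q hj]

lemma Ehr_step_asc {g : Equiv.Perm ℕ} {j : ℕ} (hj : 1 ≤ j) (h : g j < g (j+1)) :
    Ehr g (g * sigmaT j) := by
  intro p q
  rcases lt_trichotomy p j with hp | hp | hp
  · rw [Rk_mul_swap_low hp]
  · subst hp
    rw [Rk_mul_swap_row hj, Rk_succ _ p q hj]
    have : (if q ≤ g p then 1 else 0) ≤ (if q ≤ g (p+1) then 1 else 0) := by
      split_ifs <;> omega
    omega
  · rw [Rk_mul_swap_high hj hp]

lemma Ehr_mul_asc_asc {a b : Equiv.Perm ℕ} {j : ℕ} (hj : 1 ≤ j) (hE : Ehr a b)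
    (ha : a j < a (j+1)) (hb : b j < b (j+1)) : Ehr (a * sigmaT j) (b * sigmaT j) := by
  intro p q
  rcases lt_trichotomy p j with hp | hp | hp
  · rw [Rk_mul_swap_low hp, Rk_mul_swap_low hp]; exact hE p q
  · subst hp
    rw [Rk_mul_swap_row hj, Rk_mul_swap_row hj]
    by_contra hbad
    push_neg at hbad
    have h1 := hE (p-1) q
    have ha1 : q ≤ a (p+1) := by by_contra h'; simp only [if_neg h'] at hbad; split_ifs at hbad <;> omega
    have hb1 : ¬ q ≤ b (p+1) := by by_contra h'; simp only [if_pos ha1, if_pos h'] at hbad; omega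
    have h2 := hE (p+1) q
    rw [Rk_expand2 hj, Rk_expand2 hj] at h2
    simp only [if_pos ha1, if_neg hb1] at h2 hbad
    have hbj : ¬ q ≤ b p := by omega
    simp only [if_neg hbj] at h2
    split_ifs at h2 <;> omega
  · rw [Rk_mul_swap_high hj hp, Rk_mul_swap_high hj hp]; exact hE p q

lemma Ehr_mul_desc_desc {a b : Equiv.Perm ℕ} {j : ℕ} (hj : 1 ≤ j) (hE : Ehr a b)
    (ha : a (j+1) < a j) (hb : b (j+1) < b j) : Ehr (a * sigmaT j) (b * sigmaT j) := by
  intro p q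
  rcases lt_trichotomy p j with hp | hp | hp
  · rw [Rk_mul_swap_low hp, Rk_mul_swap_low hp]; exact hE p q
  · subst hp
    rw [Rk_mul_swap_row hj, Rk_mul_swap_row hj]
    have h1 := hE (p-1) q
    have h2 := hE (p+1) q
    rw [Rk_expand2 hj, Rk_expand2 hj] at h2
    split_ifs at h2 ⊢ <;> omega
  · rw [Rk_mul_swap_high hj hp, Rk_mul_swap_high hj hp]; exact hE p q

lemma Ehr_asc_desc {a b : Equiv.Perm ℕ} {j : ℕ} (hj : 1 ≤ j) (hE : Ehr a b)
    (ha : a j < a (j+1)) (hb : b (j+1) < b j) : Ehr a (b * sigmaT j) := by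
  intro p q
  rcases lt_trichotomy p j with hp | hp | hp
  · rw [Rk_mul_swap_low hp]; exact hE p q
  · subst hp
    rw [Rk_mul_swap_row hj]
    by_contra hbad
    push_neg at hbad
    have h0 := hE p q
    have h1 := hE (p-1) q
    have h2 := hE (p+1) q
    rw [Rk_expand2 hj, Rk_expand2 hj] at h2
    rw [Rk_succ a p q hj, Rk_succ b p q hj] at h0
    rw [Rk_succ a p q hj] at hbad
    split_ifs at h0 h2 hbad <;> omega
  · rw [Rk_mul_swap_high hj hp]; exact hE p q

lemma eq_one_of_Ehr_one {n : ℕ} {z : Equiv.Perm ℕ} (hz : MemSymm n z) (h : Ehr z 1) :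
    z = 1 := by
  have hz0 : z 0 = 0 := hz 0 (by simp [Set.mem_Icc])
  have key : ∀ x, z x = x := by
    intro x
    induction x using Nat.strong_induction_on with
    | _ x ih =>
      rcases Nat.eq_zero_or_pos x with hx0 | hx1
      · subst hx0; exact hz0
      by_cases hxn : x ≤ n
      · -- z x ≤ x
        have hle : z x ≤ x := by
          by_contra hcon
          push_neg at hcon
          have hmem : x ∈ (Finset.Icc 1 x).filter (fun y => (x+1) ≤ z y) := by
            simp [Finset.mem_Icc]; omega
          have h1 : 1 ≤ Rk z x (x+1) := by
            rw [Rk]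
            exact Finset.card_pos.mpr ⟨x, hmem⟩
          have h2 : Rk 1 x (x+1) = 0 := by
            rw [Rk]
            apply Finset.card_eq_zero.mpr
            ext y; simp [Finset.mem_Icc]
          have := h x (x+1)
          omega
        rcases Nat.eq_or_lt_of_le hle with hEq | hlt
        · exact hEq
        · exfalso
          have hzge : 1 ≤ z x := by
            by_contra hcon
            push_neg at hcon
            have : z x = 0 := by omega
            rw [← hz0] at this
            have := z.injective this
            omega
          have := ih (z x) (by omega)
          have := z.injective this
          omega
      · exact hz (x) (by simp [Set.mem_Icc]; omega)
  ext x
  simp [key x]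

end NCfix
namespace NCfix

lemma sublist_concat_cases {r t : List ℕ} {b : ℕ} (h : r.Sublist (t ++ [b])) :
    r.Sublist t ∨ ∃ r', r = r' ++ [b] ∧ r'.Sublist t := by
  have h' : r.reverse.Sublist (b :: t.reverse) := by
    have := h.reverse
    simpa using this
  rcases List.sublist_cons_iff.mp h' with hc | ⟨r₂, hr₂, hsub⟩
  · left
    have := hc.reverse
    simpa using this
  · right
    refine ⟨r₂.reverse, ?_, ?_⟩
    · have := congrArg List.reverse hr₂
      simpa using this
    · have := hsub.reverse
      simpa using this

lemma memsymm_mul_sig {n : ℕ} {z : Equiv.Perm ℕ} {b : ℕ} (hz : MemSymm n z)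
    (hb1 : 1 ≤ b) (hb2 : b ≤ n - 1) : MemSymm n (z * sigmaT b) := by
  intro x hx
  rw [Equiv.Perm.mul_apply]
  have hx' : x ∉ Finset.Icc 1 n := by simpa [Finset.mem_Icc, Set.mem_Icc] using hx
  rw [sig_fix hb1 hb2 hx']
  exact hz x hx

lemma Ehr_of_sublist {n : ℕ} {w : Equiv.Perm ℕ} {t r : List ℕ}
    (ht : IsReducedWord n w t) (hr : r.Sublist t) : Ehr (wordProd r) w := by
  induction t using List.reverseRecOn generalizing w r with
  | nil =>
    have : r = [] := List.sublist_nil.mp hr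
    subst this
    have : w = 1 := by rw [← ht.1.2]; rfl
    subst this
    exact Ehr_refl 1
  | append_singleton t b ih =>
    obtain ⟨hredt, hasc, hwprod, _⟩ := reduced_concat_split ht
    have hb := ht.1.1 b (by simp)
    have hlast : Ehr (wordProd t) w := by
      rw [hwprod]
      exact Ehr_step_asc hb.1 hasc
    rcases sublist_concat_cases hr with hc | ⟨r', rfl, hsub⟩
    · exact Ehr_trans (ih hredt hc) hlast
    · have hE : Ehr (wordProd r') (wordProd t) := ih hredt hsub
      rw [wordProd_concat, hwprod]
      have hneq : (wordProd r') b ≠ (wordProd r') (b+1) := fun hEq => by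
        have := (wordProd r').injective hEq; omega
      rcases lt_or_gt_of_ne hneq with hasc' | hdesc'
      · exact Ehr_mul_asc_asc hb.1 hE hasc' hasc
      · have h1 : Ehr (wordProd r' * sigmaT b) (wordProd r') := by
          have : (wordProd r' * sigmaT b) b < (wordProd r' * sigmaT b) (b+1) := by
            rw [Equiv.Perm.mul_apply, Equiv.Perm.mul_apply, sig_at, sig_at']
            exact hdesc'
          have h2 := Ehr_step_asc hb.1 this
          rwa [mul_assoc, sig_sq, mul_one] at h2
        exact Ehr_trans h1 (Ehr_trans hE (Ehr_step_asc hb.1 hasc))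

lemma exists_reduced_sublist {n : ℕ} {z w : Equiv.Perm ℕ} {t : List ℕ}
    (hz : MemSymm n z) (hE : Ehr z w) (ht : IsReducedWord n w t) :
    ∃ r, IsReducedWord n z r ∧ r.Sublist t := by
  induction t using List.reverseRecOn generalizing z w with
  | nil =>
    have hw1 : w = 1 := by rw [← ht.1.2]; rfl
    subst hw1
    have hz1 : z = 1 := eq_one_of_Ehr_one hz hE
    subst hz1
    exact ⟨[], ⟨⟨fun a ha => by simp at ha, rfl⟩, fun t' _ => by simp⟩, List.nil_sublist _⟩
  | append_singleton t b ih =>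
    obtain ⟨hredt, hasc, hwprod, hinvstep⟩ := reduced_concat_split ht
    have hb := ht.1.1 b (by simp)
    have hwt : w * sigmaT b = wordProd t := by
      rw [hwprod, mul_assoc, sig_sq, mul_one]
    have hwdesc : w (b+1) < w b := by
      rw [hwprod, Equiv.Perm.mul_apply, Equiv.Perm.mul_apply, sig_at, sig_at']
      exact hasc
    have hneq : z b ≠ z (b+1) := fun hEq => by have := z.injective hEq; omega
    rcases lt_or_gt_of_ne hneq with hzasc | hzdesc
    · have hE' : Ehr z (wordProd t) := by
        rw [← hwt]
        exact Ehr_asc_desc hb.1 hE hzasc hwdesc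
      obtain ⟨r, hr, hsub⟩ := ih hz hE' hredt
      exact ⟨r, hr, hsub.trans (by simp)⟩
    · have hE' : Ehr (z * sigmaT b) (wordProd t) := by
        rw [← hwt]
        exact Ehr_mul_desc_desc hb.1 hE hzdesc hwdesc
      have hz' : MemSymm n (z * sigmaT b) := memsymm_mul_sig hz hb.1 hb.2
      obtain ⟨r, hr, hsub⟩ := ih hz' hE' hredt
      refine ⟨r ++ [b], ?_, hsub.append (List.Sublist.refl _)⟩
      have hword : IsWord n z (r ++ [b]) := by
        constructor
        · intro a ha
          rcases List.mem_append.mp ha with h | h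
          · exact hr.1.1 a h
          · simp at h; subst h; exact hb
        · rw [wordProd_concat, hr.1.2, mul_assoc, sig_sq, mul_one]
      rw [reduced_iff_len hword]
      have hlen := reduced_len hr
      have hstep := coxInv_desc (g := z) hb.1 hb.2 hzdesc
      simp only [List.length_append, List.length_singleton]
      omega

end NCfix
namespace NCfix

lemma memsymm_of_reduced {n : ℕ} {w : Equiv.Perm ℕ} {s : List ℕ} (h : IsReducedWord n w s) :
    MemSymm n w := by
  rw [← h.1.2]; exact memsymm_of_word h.1.1

lemma bruhat_Ehr {n : ℕ} {v w : Equiv.Perm ℕ} (h : BruhatLE n v w) : Ehr v w := by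
  obtain ⟨r, t, hr, ht, hsub⟩ := h
  rw [← hr.1.2]
  exact Ehr_of_sublist ht hsub

lemma bruhat_all {n : ℕ} {z w : Equiv.Perm ℕ} {t : List ℕ} (h : BruhatLE n z w)
    (ht : IsReducedWord n w t) : ∃ r, IsReducedWord n z r ∧ r.Sublist t := by
  obtain ⟨r0, t0, hr0, ht0, _⟩ := h
  exact exists_reduced_sublist (memsymm_of_reduced hr0) (bruhat_Ehr ⟨r0, t0, hr0, ht0, ‹_›⟩) ht

lemma bruhat_of_Ehr {n : ℕ} {z w : Equiv.Perm ℕ} {t : List ℕ} (hz : MemSymm n z)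
    (hE : Ehr z w) (ht : IsReducedWord n w t) : BruhatLE n z w := by
  obtain ⟨r, hr, hs⟩ := exists_reduced_sublist hz hE ht
  exact ⟨r, t, hr, ht, hs⟩

lemma bruhat_refl {n : ℕ} {w : Equiv.Perm ℕ} {s : List ℕ} (h : IsReducedWord n w s) :
    BruhatLE n w w := ⟨s, s, h, h, List.Sublist.refl _⟩

lemma bruhat_trans {n : ℕ} {a b c : Equiv.Perm ℕ} (h1 : BruhatLE n a b) (h2 : BruhatLE n b c) :
    BruhatLE n a c := by
  obtain ⟨ra, tb, hra, htb, hsub1⟩ := h1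
  obtain ⟨rb, tc, hrb, htc, hsub2⟩ := h2
  exact bruhat_of_Ehr (memsymm_of_reduced hra)
    (Ehr_trans (bruhat_Ehr ⟨ra, tb, hra, htb, hsub1⟩) (bruhat_Ehr ⟨rb, tc, hrb, htc, hsub2⟩)) htc

lemma bruhat_inv_le {n : ℕ} {z w : Equiv.Perm ℕ} (h : BruhatLE n z w) :
    coxInv n z ≤ coxInv n w := by
  obtain ⟨r, t, hr, ht, hsub⟩ := h
  have := hsub.length_le
  rw [reduced_len hr, reduced_len ht] at this
  exact this

lemma bruhat_eq_of_inv {n : ℕ} {z w : Equiv.Perm ℕ} (h : BruhatLE n z w)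
    (hI : coxInv n z = coxInv n w) : z = w := by
  obtain ⟨r, t, hr, ht, hsub⟩ := h
  have hl : r.length = t.length := by rw [reduced_len hr, reduced_len ht, hI]
  have := hsub.eq_of_length hl
  rw [← hr.1.2, ← ht.1.2, this]

lemma sigma_ne_one (j : ℕ) : sigmaT j ≠ 1 := by
  intro h
  have : sigmaT j j = (1 : Equiv.Perm ℕ) j := by rw [h]
  rw [sig_at] at this
  simp at this

lemma reduced_sigma {n j : ℕ} (h1 : 1 ≤ j) (h2 : j ≤ n - 1) :
    IsReducedWord n (sigmaT j) [j] := by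
  refine ⟨⟨fun a ha => by simp at ha; subst ha; exact ⟨h1, h2⟩, wordProd_singleton j⟩, ?_⟩
  intro t ht
  cases t with
  | nil => exact absurd ht.2.symm (sigma_ne_one j)
  | cons a t' => simp

lemma coxInv_sigma {n j : ℕ} (h1 : 1 ≤ j) (h2 : j ≤ n - 1) : coxInv n (sigmaT j) = 1 := by
  have : (1 : Equiv.Perm ℕ) j < (1 : Equiv.Perm ℕ) (j+1) := by simp
  have h := coxInv_asc (g := 1) h1 h2 this
  rw [one_mul, coxInv_one] at h
  exact h

lemma sigma_inj {m j : ℕ} (h : sigmaT m = sigmaT j) : m = j := by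
  have hm : sigmaT j m = m + 1 := by rw [← h, sig_at]
  rw [sig_apply] at hm
  split_ifs at hm <;> omega

lemma mem_supp_iff {n : ℕ} {w : Equiv.Perm ℕ} {t : List ℕ} (ht : IsReducedWord n w t)
    {j : ℕ} : j ∈ supp n w ↔ j ∈ t := by
  constructor
  · rintro ⟨s0, hs0, hjmem⟩
    have hb := hs0.1.1 j hjmem
    have hle : BruhatLE n (sigmaT j) w :=
      ⟨[j], s0, reduced_sigma hb.1 hb.2, hs0, List.singleton_sublist.mpr hjmem⟩
    obtain ⟨r, hr, hsub⟩ := bruhat_all hle ht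
    have hlen : r.length = 1 := by rw [reduced_len hr, coxInv_sigma hb.1 hb.2]
    match r, hlen with
    | [m], _ =>
      have : sigmaT m = sigmaT j := by rw [← wordProd_singleton m, hr.1.2]
      have := sigma_inj this
      subst this
      exact hsub.subset (by simp)
  · intro hj
    exact ⟨t, ht, hj⟩

lemma sigma_le_iff {n : ℕ} {w : Equiv.Perm ℕ} {t : List ℕ} (ht : IsReducedWord n w t)
    {j : ℕ} (hb1 : 1 ≤ j) (hb2 : j ≤ n - 1) :
    BruhatLE n (sigmaT j) w ↔ j ∈ supp n w := by
  constructor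
  · intro hle
    obtain ⟨r, hr, hsub⟩ := bruhat_all hle ht
    have hlen : r.length = 1 := by rw [reduced_len hr, coxInv_sigma hb1 hb2]
    rw [mem_supp_iff ht]
    match r, hlen with
    | [m], _ =>
      have : sigmaT m = sigmaT j := by rw [← wordProd_singleton m, hr.1.2]
      have := sigma_inj this
      subst this
      exact hsub.subset (by simp)
  · intro hj
    rw [mem_supp_iff ht] at hj
    exact ⟨[j], t, reduced_sigma hb1 hb2, ht, List.singleton_sublist.mpr hj⟩

lemma supp_letter_bounds {n : ℕ} {w : Equiv.Perm ℕ} {j : ℕ} (h : j ∈ supp n w) :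
    1 ≤ j ∧ j ≤ n - 1 := by
  obtain ⟨s, hs, hj⟩ := h
  exact hs.1.1 j hj

lemma supp_mono {n : ℕ} {z w : Equiv.Perm ℕ} (h : BruhatLE n z w) :
    supp n z ⊆ supp n w := by
  intro j hj
  obtain ⟨rz, tw, hrz, htw, hsub⟩ := h
  have hb := supp_letter_bounds hj
  have h1 : BruhatLE n (sigmaT j) z := (sigma_le_iff hrz hb.1 hb.2).mpr hj
  have h2 : BruhatLE n (sigmaT j) w := bruhat_trans h1 ⟨rz, tw, hrz, htw, hsub⟩
  exact (sigma_le_iff htw hb.1 hb.2).mp h2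

end NCfix
namespace NCfix

lemma chain_inv_le {n : ℕ} (f : ℕ → Equiv.Perm ℕ) (k : ℕ)
    (hstep : ∀ j < k, BruhatLE n (f j) (f (j+1)) ∧ f j ≠ f (j+1)) :
    coxInv n (f 0) + k ≤ coxInv n (f k) := by
  induction k with
  | zero => simp
  | succ k ih =>
    have h1 := ih (fun j hj => hstep j (by omega))
    have h2 := hstep k (by omega)
    have h3 : coxInv n (f k) ≤ coxInv n (f (k+1)) := bruhat_inv_le h2.1
    have h4 : coxInv n (f k) ≠ coxInv n (f (k+1)) := fun hEq =>
      h2.2 (bruhat_eq_of_inv h2.1 hEq)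
    omega

lemma exists_bruhat_chain {n : ℕ} {z : Equiv.Perm ℕ} {t : List ℕ} (ht : IsReducedWord n z t) :
    ∃ f : ℕ → Equiv.Perm ℕ, f 0 = 1 ∧ f (coxInv n z) = z ∧
      (∀ j < coxInv n z, BruhatLE n (f j) (f (j+1)) ∧ f j ≠ f (j+1)) ∧
      (∀ j, BruhatLE n (f j) z) := by
  refine ⟨fun j => wordProd (t.take j), by simp, ?_, ?_, ?_⟩
  · show wordProd (t.take (coxInv n z)) = z
    rw [← reduced_len ht, List.take_length, ht.1.2]
  · intro j hj
    have hjlen : j < t.length := by rw [reduced_len ht]; exact hj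
    have hsub : (t.take j).Sublist (t.take (j+1)) := by
      have hpref : t.take j = (t.take (j+1)).take j := by
        rw [List.take_take]
        congr 1
        omega
      rw [hpref]
      exact (List.take_prefix _ _).sublist
    constructor
    · exact ⟨t.take j, t.take (j+1), reduced_take ht j, reduced_take ht (j+1), hsub⟩
    · intro hEq
      have hEq' : wordProd (t.take j) = wordProd (t.take (j+1)) := hEq
      have l1 : (t.take j).length = j := by
        rw [List.length_take]; omega
      have l2 : (t.take (j+1)).length = j + 1 := by
        rw [List.length_take]; omega
      have e1 := reduced_len (reduced_take ht j)
      have e2 := reduced_len (reduced_take ht (j+1))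
      rw [hEq'] at e1
      omega
  · intro j
    exact ⟨t.take j, t, reduced_take ht j, ht, List.take_sublist j t⟩

lemma prank_strict {n : ℕ} {v : Equiv.Perm ℕ} {p q : Bool × IdealB n v}
    (hle : p.1 ≤ q.1 ∧ IdealLE n v p.2 q.2) (hne : p ≠ q) :
    (cond p.1 1 0) + coxInv n p.2.1 < (cond q.1 1 0) + coxInv n q.2.1 := by
  obtain ⟨pb, py⟩ := p
  obtain ⟨qb, qy⟩ := q
  obtain ⟨hb, hy⟩ := hle
  have hinvle : coxInv n py.1 ≤ coxInv n qy.1 := bruhat_inv_le hy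
  have hsame : pb = qb → coxInv n py.1 < coxInv n qy.1 := by
    intro hbEq
    have hyne : py ≠ qy := by
      intro h
      exact hne (by rw [h, hbEq])
    have h1 : py.1 ≠ qy.1 := fun h => hyne (Subtype.ext h)
    have h2 : coxInv n py.1 ≠ coxInv n qy.1 := fun hEq => h1 (bruhat_eq_of_inv hy hEq)
    omega
  cases pb <;> cases qb <;> simp only [cond_false, cond_true]
  · have := hsame rfl; omega
  · omega
  · exact absurd hb (by simp)
  · have := hsame rfl; omega

lemma chain_prank_le {n : ℕ} {v : Equiv.Perm ℕ} (g : ℕ → Bool × IdealB n v) (k : ℕ)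
    (hstep : ∀ j < k, ((g j).1 ≤ (g (j+1)).1 ∧ IdealLE n v (g j).2 (g (j+1)).2) ∧ g j ≠ g (j+1)) :
    k ≤ (cond (g k).1 1 0) + coxInv n (g k).2.1 := by
  induction k with
  | zero => simp
  | succ k ih =>
    have h1 := ih (fun j hj => hstep j (by omega))
    have h2 := hstep k (by omega)
    have := prank_strict h2.1 h2.2
    omega

end NCfix
namespace NCfix

lemma rank_formula {n : ℕ} {w v : Equiv.Perm ℕ}
    (e : IdealB n w ≃ Bool × IdealB n v)
    (he : ∀ a b : IdealB n w, IdealLE n w a b ↔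
      ((e a).1 ≤ (e b).1 ∧ IdealLE n v (e a).2 (e b).2))
    (z : IdealB n w) :
    coxInv n z.1 = (cond (e z).1 1 0) + coxInv n (e z).2.1 := by
  obtain ⟨tz, tw', htz, htw', hsubz⟩ := z.2
  obtain ⟨f, hf0, hfK, hfstep, hfbelow⟩ := exists_bruhat_chain htz
  have hzw : BruhatLE n z.1 w := ⟨tz, tw', htz, htw', hsubz⟩
  set K := coxInv n z.1 with hK
  have hmem : ∀ j, BruhatLE n (f (min j K)) w := fun j =>
    bruhat_trans (hfbelow (min j K)) hzw
  set g : ℕ → Bool × IdealB n v := fun j => e ⟨f (min j K), hmem j⟩ with hg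
  have hgstep : ∀ j < K, ((g j).1 ≤ (g (j+1)).1 ∧ IdealLE n v (g j).2 (g (j+1)).2) ∧
      g j ≠ g (j+1) := by
    intro j hj
    have hmin1 : min j K = j := by omega
    have hmin2 : min (j+1) K = j + 1 := by omega
    have hstep := hfstep j hj
    constructor
    · rw [hg]
      simp only
      refine (he _ _).mp ?_
      show BruhatLE n (f (min j K)) (f (min (j+1) K))
      rw [hmin1, hmin2]; exact hstep.1
    · intro hEq
      apply hstep.2
      have h1 := e.injective hEq
      have h2 := congrArg Subtype.val h1
      simpa [hmin1, hmin2] using h2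
  have hle1 : K ≤ (cond (g K).1 1 0) + coxInv n (g K).2.1 := chain_prank_le g K hgstep
  have hgK : g K = e z := by
    rw [hg]
    simp only
    congr 1
    apply Subtype.ext
    simp [hfK]
  rw [hgK] at hle1
  -- other direction
  obtain ⟨ty, tv', hty, htv', hsuby⟩ := (e z).2.2
  have hyv : BruhatLE n (e z).2.1 v := ⟨ty, tv', hty, htv', hsuby⟩
  obtain ⟨fy, hfy0, hfyM, hfystep, hfybelow⟩ := exists_bruhat_chain hty
  set M := coxInv n (e z).2.1 with hM
  have hYmem : ∀ j, BruhatLE n (fy (min j M)) v := fun j =>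
    bruhat_trans (hfybelow (min j M)) hyv
  set F : ℕ → Equiv.Perm ℕ :=
    fun j => (e.symm (false, ⟨fy (min j M), hYmem j⟩)).1 with hF
  have he' : ∀ p q : Bool × IdealB n v,
      (p.1 ≤ q.1 ∧ IdealLE n v p.2 q.2) ↔ BruhatLE n (e.symm p).1 (e.symm q).1 := by
    intro p q
    have h := he (e.symm p) (e.symm q)
    rw [e.apply_symm_apply, e.apply_symm_apply] at h
    exact h.symm
  have hFstep : ∀ j < M, BruhatLE n (F j) (F (j+1)) ∧ F j ≠ F (j+1) := by
    intro j hj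
    have hmin1 : min j M = j := by omega
    have hmin2 : min (j+1) M = j + 1 := by omega
    have hstep := hfystep j hj
    constructor
    · rw [hF]
      simp only
      rw [← he']
      refine ⟨le_refl _, ?_⟩
      show BruhatLE n (fy (min j M)) (fy (min (j+1) M))
      rw [hmin1, hmin2]
      exact hstep.1
    · intro hEq
      apply hstep.2
      have h1 : (e.symm (false, ⟨fy (min j M), hYmem j⟩)) =
          (e.symm (false, ⟨fy (min (j+1) M), hYmem (j+1)⟩)) := Subtype.ext hEq
      have h2 := e.symm.injective h1
      have h3 := congrArg (fun p => (Prod.snd p).1) h2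
      simpa [hmin1, hmin2] using h3
  have hchain := chain_inv_le F M hFstep
  have hFM : F M = (e.symm (false, (e z).2)).1 := by
    rw [hF]
    simp only
    congr 3
    apply Subtype.ext
    simp [hfyM]
  have hlow : M ≤ coxInv n (e.symm (false, (e z).2)).1 := by
    rw [← hFM]; omega
  cases hδ : (e z).1 with
  | false =>
    have hez : e z = (false, (e z).2) := by
      rw [← hδ]
    have hsymm : (e.symm (false, (e z).2)) = z := by
      rw [← hez, e.symm_apply_apply]
    rw [hsymm] at hlow
    rw [hδ] at hle1
    simp only [cond_false] at hle1 ⊢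
    omega
  | true =>
    have hstep : BruhatLE n (e.symm (false, (e z).2)).1 z.1 := by
      have h := (he' (false, (e z).2) (e z)).mp
        ⟨by simp, bruhat_refl hty⟩
      rwa [e.symm_apply_apply] at h
    have hne : (e.symm (false, (e z).2)).1 ≠ z.1 := by
      intro hEq
      have h1 : e.symm (false, (e z).2) = z := Subtype.ext hEq
      have h2 := congrArg e h1
      rw [e.apply_symm_apply] at h2
      have := congrArg Prod.fst h2
      rw [hδ] at this
      simp at this
    have h3 : coxInv n (e.symm (false, (e z).2)).1 < coxInv n z.1 := by
      have hle := bruhat_inv_le hstep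
      have : coxInv n (e.symm (false, (e z).2)).1 ≠ coxInv n z.1 :=
        fun hEq => hne (bruhat_eq_of_inv hstep hEq)
      omega
    rw [hδ] at hle1
    simp only [cond_true] at hle1 ⊢
    omega

end NCfix
namespace NCfix

lemma red_word_of_le {n : ℕ} {z w : Equiv.Perm ℕ} (h : BruhatLE n z w) :
    ∃ r, IsReducedWord n z r := by
  obtain ⟨r, t, hr, ht, hsub⟩ := h
  exact ⟨r, hr⟩

lemma inv_zero_eq_one {n : ℕ} {z : Equiv.Perm ℕ} (hz : ∃ r, IsReducedWord n z r)
    (h : coxInv n z = 0) : z = 1 := by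
  obtain ⟨r, hr⟩ := hz
  have hlen : r.length = 0 := by rw [reduced_len hr, h]
  have : r = [] := List.length_eq_zero_iff.mp hlen
  subst this
  rw [← hr.1.2]; rfl

lemma inv_one_eq_sigma {n : ℕ} {z : Equiv.Perm ℕ} (hz : ∃ r, IsReducedWord n z r)
    (h : coxInv n z = 1) : ∃ m, 1 ≤ m ∧ m ≤ n - 1 ∧ z = sigmaT m := by
  obtain ⟨r, hr⟩ := hz
  have hlen : r.length = 1 := by rw [reduced_len hr, h]
  match r, hlen with
  | [m], _ =>
    have hb := hr.1.1 m (by simp)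
    exact ⟨m, hb.1, hb.2, by rw [← hr.1.2, wordProd_singleton]⟩

lemma wp3 (a b d : ℕ) : wordProd [a,b,d] = sigmaT a * (sigmaT b * sigmaT d) := by
  simp [wordProd]

lemma sig_spec (j x : ℕ) :
    (x = j ∧ sigmaT j x = j+1) ∨ (x = j+1 ∧ sigmaT j x = j) ∨
      (x ≠ j ∧ x ≠ j+1 ∧ sigmaT j x = x) := by
  by_cases h1 : x = j
  · left; exact ⟨h1, by rw [sig_apply, if_pos h1]⟩
  · by_cases h2 : x = j+1
    · right; left; exact ⟨h2, by rw [sig_apply, if_neg h1, if_pos h2]⟩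
    · right; right; exact ⟨h1, h2, by rw [sig_apply, if_neg h1, if_neg h2]⟩

lemma braid {i c : ℕ} (hadj : c = i+1 ∨ i = c+1) :
    sigmaT i * (sigmaT c * sigmaT i) = sigmaT c * (sigmaT i * sigmaT c) := by
  rcases hadj with rfl | rfl
  · -- c = i+1
    have L : sigmaT i * (sigmaT (i+1) * sigmaT i) = Equiv.swap i (i+1+1) := by
      unfold sigmaT
      rw [← mul_assoc, Equiv.swap_comm i (i+1), Equiv.swap_comm (i+1) (i+1+1)]
      exact Equiv.swap_mul_swap_mul_swap (by omega) (by omega)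
    have R : sigmaT (i+1) * (sigmaT i * sigmaT (i+1)) = Equiv.swap (i+1+1) i := by
      unfold sigmaT
      rw [← mul_assoc]
      exact Equiv.swap_mul_swap_mul_swap (by omega) (by omega)
    rw [L, R, Equiv.swap_comm]
  · -- i = c+1
    have L : sigmaT (c+1) * (sigmaT c * sigmaT (c+1)) = Equiv.swap (c+1+1) c := by
      unfold sigmaT
      rw [← mul_assoc]
      exact Equiv.swap_mul_swap_mul_swap (by omega) (by omega)
    have R : sigmaT c * (sigmaT (c+1) * sigmaT c) = Equiv.swap c (c+1+1) := by
      unfold sigmaT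
      rw [← mul_assoc, Equiv.swap_comm c (c+1), Equiv.swap_comm (c+1) (c+1+1)]
      exact Equiv.swap_mul_swap_mul_swap (by omega) (by omega)
    rw [L, R, Equiv.swap_comm]

lemma swap_comm_far {x y : ℕ} (h : x + 2 ≤ y ∨ y + 2 ≤ x) :
    sigmaT x * sigmaT y = sigmaT y * sigmaT x := by
  apply Equiv.ext
  intro a
  simp only [Equiv.Perm.mul_apply]
  have s1 := sig_spec y a
  have s2 := sig_spec x (sigmaT y a)
  have s3 := sig_spec x a
  have s4 := sig_spec y (sigmaT x a)
  rcases s1 with ⟨e1,f1⟩|⟨e1,f1⟩|⟨e1,e1',f1⟩ <;>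
    rcases s2 with ⟨e2,f2⟩|⟨e2,f2⟩|⟨e2,e2',f2⟩ <;>
    rcases s3 with ⟨e3,f3⟩|⟨e3,f3⟩|⟨e3,e3',f3⟩ <;>
    rcases s4 with ⟨e4,f4⟩|⟨e4,f4⟩|⟨e4,e4',f4⟩ <;>
    omega

lemma coxInv_cic {n i c : ℕ} (hi1 : 1 ≤ i) (hi2 : i ≤ n-1) (hc1 : 1 ≤ c) (hc2 : c ≤ n-1)
    (hadj : c = i+1 ∨ i = c+1) :
    coxInv n (sigmaT c * (sigmaT i * sigmaT c)) = 3 := by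
  have e1 : coxInv n (sigmaT c) = 1 := coxInv_sigma hc1 hc2
  have a1 : (sigmaT c) i < (sigmaT c) (i+1) := by
    have s1 := sig_spec c i
    have s2 := sig_spec c (i+1)
    rcases hadj with h | h <;> omega
  have e2 : coxInv n (sigmaT c * sigmaT i) = 2 := by
    rw [coxInv_asc hi1 hi2 a1, e1]
  have a2 : (sigmaT c * sigmaT i) c < (sigmaT c * sigmaT i) (c+1) := by
    simp only [Equiv.Perm.mul_apply]
    have s1 := sig_spec i c
    have s2 := sig_spec c (sigmaT i c)
    have s3 := sig_spec i (c+1)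
    have s4 := sig_spec c (sigmaT i (c+1))
    rcases hadj with h | h <;> omega
  have e3 : coxInv n (sigmaT c * sigmaT i * sigmaT c) = 3 := by
    rw [coxInv_asc hc1 hc2 a2, e2]
  rw [← mul_assoc]
  exact e3

lemma reduced_cic {n i c : ℕ} (hi1 : 1 ≤ i) (hi2 : i ≤ n-1) (hc1 : 1 ≤ c) (hc2 : c ≤ n-1)
    (hadj : c = i+1 ∨ i = c+1) :
    IsReducedWord n (sigmaT c * (sigmaT i * sigmaT c)) [c, i, c] := by
  have hword : IsWord n (sigmaT c * (sigmaT i * sigmaT c)) [c,i,c] := by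
    constructor
    · intro j hj
      simp at hj
      rcases hj with h | h | h <;> subst h <;> constructor <;> omega
    · rw [wp3]
  rw [reduced_iff_len hword]
  rw [coxInv_cic hi1 hi2 hc1 hc2 hadj]
  rfl

lemma reduced_ici {n i c : ℕ} (hi1 : 1 ≤ i) (hi2 : i ≤ n-1) (hc1 : 1 ≤ c) (hc2 : c ≤ n-1)
    (hadj : c = i+1 ∨ i = c+1) :
    IsReducedWord n (sigmaT c * (sigmaT i * sigmaT c)) [i, c, i] := by
  have hword : IsWord n (sigmaT c * (sigmaT i * sigmaT c)) [i,c,i] := by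
    constructor
    · intro j hj
      simp at hj
      rcases hj with h | h | h <;> subst h <;> constructor <;> omega
    · rw [wp3, braid hadj]
  rw [reduced_iff_len hword]
  rw [coxInv_cic hi1 hi2 hc1 hc2 hadj]
  rfl

lemma sublist3_cases {r : List ℕ} {a b d : ℕ} (h : r.Sublist [a,b,d]) :
    r = [] ∨ r = [a] ∨ r = [b] ∨ r = [d] ∨ r = [a,b] ∨ r = [a,d] ∨ r = [b,d] ∨ r = [a,b,d] := by
  have h1 : r.Sublist ([a,b] ++ [d]) := h
  rcases sublist_concat_cases h1 with h2 | ⟨r', rfl, h2⟩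
  · have h3 : r.Sublist ([a] ++ [b]) := h2
    rcases sublist_concat_cases h3 with h4 | ⟨r'', rfl, h4⟩
    · have h5 : r.Sublist ([] ++ [a]) := h4
      rcases sublist_concat_cases h5 with h6 | ⟨r3, rfl, h6⟩
      · obtain rfl := List.sublist_nil.mp h6; simp
      · obtain rfl := List.sublist_nil.mp h6; simp
    · have h5 : r''.Sublist ([] ++ [a]) := h4
      rcases sublist_concat_cases h5 with h6 | ⟨r3, rfl, h6⟩
      · obtain rfl := List.sublist_nil.mp h6; simp
      · obtain rfl := List.sublist_nil.mp h6; simp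
  · have h3 : r'.Sublist ([a] ++ [b]) := h2
    rcases sublist_concat_cases h3 with h4 | ⟨r'', rfl, h4⟩
    · have h5 : r'.Sublist ([] ++ [a]) := h4
      rcases sublist_concat_cases h5 with h6 | ⟨r3, rfl, h6⟩
      · obtain rfl := List.sublist_nil.mp h6; simp
      · obtain rfl := List.sublist_nil.mp h6; simp
    · have h5 : r''.Sublist ([] ++ [a]) := h4
      rcases sublist_concat_cases h5 with h6 | ⟨r3, rfl, h6⟩
      · obtain rfl := List.sublist_nil.mp h6; simp
      · obtain rfl := List.sublist_nil.mp h6; simp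

lemma below_u_mem {n i c : ℕ} (hi1 : 1 ≤ i) (hi2 : i ≤ n-1) (hc1 : 1 ≤ c) (hc2 : c ≤ n-1)
    (hadj : c = i+1 ∨ i = c+1) {z : Equiv.Perm ℕ}
    (hz : BruhatLE n z (sigmaT c * (sigmaT i * sigmaT c))) :
    z = 1 ∨ z = sigmaT i ∨ z = sigmaT c ∨ z = sigmaT i * sigmaT c ∨
      z = sigmaT c * sigmaT i ∨ z = sigmaT c * (sigmaT i * sigmaT c) := by
  obtain ⟨r, hr, hsub⟩ := bruhat_all hz (reduced_cic hi1 hi2 hc1 hc2 hadj)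
  have hz' : wordProd r = z := hr.1.2
  rcases sublist3_cases hsub with rfl | rfl | rfl | rfl | rfl | rfl | rfl | rfl
  · left; rw [← hz']; rfl
  · right; right; left; rw [← hz', wordProd_singleton]
  · right; left; rw [← hz', wordProd_singleton]
  · right; right; left; rw [← hz', wordProd_singleton]
  · right; right; right; right; left; rw [← hz']; simp [wordProd]
  · left; rw [← hz']
    have : wordProd [c, c] = sigmaT c * sigmaT c := by simp [wordProd]
    rw [this, sig_sq]
  · right; right; right; left; rw [← hz']; simp [wordProd]
  · right; right; right; right; right; rw [← hz', wp3]

end NCfix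
namespace NCfix

lemma reduced_nil {n : ℕ} : IsReducedWord n 1 [] :=
  ⟨⟨fun a ha => by simp at ha, rfl⟩, fun t _ => by simp⟩

lemma sublist_length_pred {r s : List ℕ} (h : r.Sublist s) (hl : r.length + 1 = s.length) :
    ∃ A x B, s = A ++ x :: B ∧ r = A ++ B := by
  induction h with
  | slnil => simp at hl
  | cons x h ih =>
    rename_i l1 l2
    have : l1.length ≤ l2.length := h.length_le
    simp at hl
    have heq : l1 = l2 := h.eq_of_length (by omega)
    exact ⟨[], x, l2, by simp, by simp [heq]⟩
  | cons_cons x h ih =>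
    rename_i l1 l2
    simp at hl
    obtain ⟨A, y, B, h1, h2⟩ := ih hl
    exact ⟨x :: A, y, B, by simp [h1], by simp [h2]⟩

lemma sand_aa (a d : ℕ) : sigmaT a * (sigmaT a * sigmaT d) = sigmaT d := by
  rw [← mul_assoc, sig_sq, one_mul]

lemma sand_dd (a d : ℕ) : sigmaT a * (sigmaT d * sigmaT d) = sigmaT a := by
  rw [sig_sq, mul_one]

lemma far_sand {x y : ℕ} (h : x + 2 ≤ y ∨ y + 2 ≤ x) :
    sigmaT x * (sigmaT y * sigmaT x) = sigmaT y := by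
  have hcom : sigmaT y * sigmaT x = sigmaT x * sigmaT y :=
    swap_comm_far (by omega)
  rw [hcom, ← mul_assoc, sig_sq, one_mul]

lemma three_word_classify {n m1 m2 : ℕ} (h11 : 1 ≤ m1) (h12 : m1 ≤ n-1)
    (h21 : 1 ≤ m2) (h22 : m2 ≤ n-1) (hne : m1 ≠ m2) {r : List ℕ} {y : Equiv.Perm ℕ}
    (hr : IsReducedWord n y r) (hinv : coxInv n y = 3)
    (hletters : ∀ j ∈ r, j = m1 ∨ j = m2) :
    (m2 = m1 + 1 ∨ m1 = m2 + 1) ∧ (r = [m1,m2,m1] ∨ r = [m2,m1,m2]) := by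
  have hrlen : r.length = 3 := by rw [reduced_len hr, hinv]
  have hex : ∃ a b d, r = [a, b, d] := by
    match r, hrlen with
    | [a, b, d], _ => exact ⟨a, b, d, rfl⟩
  obtain ⟨a, b, d, rfl⟩ := hex
  have hy : sigmaT a * (sigmaT b * sigmaT d) = y := by rw [← wp3]; exact hr.1.2
  have ha := hletters a (by simp)
  have hb := hletters b (by simp)
  have hd := hletters d (by simp)
  have hnotsig : ∀ m, 1 ≤ m → m ≤ n - 1 → y ≠ sigmaT m := by
    intro m hm1 hm2 hEq
    rw [hEq, coxInv_sigma hm1 hm2] at hinv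
    omega
  have hab : a ≠ b := by
    intro hEq
    subst hEq
    refine hnotsig d ?_ ?_ (by rw [← hy, sand_aa])
    · rcases hd with h | h <;> omega
    · rcases hd with h | h <;> omega
  have hbd : b ≠ d := by
    intro hEq
    subst hEq
    refine hnotsig a ?_ ?_ (by rw [← hy, sand_dd])
    · rcases ha with h | h <;> omega
    · rcases ha with h | h <;> omega
  have had : a = d := by
    rcases ha with h | h <;> rcases hb with h' | h' <;> rcases hd with h'' | h'' <;> omega
  subst had
  have hadj : m2 = m1 + 1 ∨ m1 = m2 + 1 := by
    by_contra hf
    push_neg at hf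
    have hfar : a + 2 ≤ b ∨ b + 2 ≤ a := by
      rcases ha with h | h <;> rcases hb with h' | h' <;> omega
    refine hnotsig b ?_ ?_ (by rw [← hy, far_sand hfar])
    · rcases hb with h | h <;> omega
    · rcases hb with h | h <;> omega
  refine ⟨hadj, ?_⟩
  rcases ha with h | h <;> rcases hb with h' | h' <;> subst h <;> subst h'
  · omega
  · left; rfl
  · right; rfl
  · omega

noncomputable def letterOf (z : Equiv.Perm ℕ) : ℕ := sInf {x | z x ≠ x}

lemma letterOf_sigma (m : ℕ) : letterOf (sigmaT m) = m := by
  have hset : {x | sigmaT m x ≠ x} = {m, m+1} := by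
    ext x
    simp only [Set.mem_setOf_eq, Set.mem_insert_iff, Set.mem_singleton_iff]
    rcases sig_spec m x with ⟨e, f⟩ | ⟨e, f⟩ | ⟨e, e', f⟩ <;> constructor <;> intro h <;> omega
  rw [letterOf, hset]
  have hmem : m ∈ ({m, m+1} : Set ℕ) := by simp
  have h1 := Nat.sInf_le hmem
  have h2 := Nat.sInf_mem (⟨m, hmem⟩ : Set.Nonempty ({m, m+1} : Set ℕ))
  simp only [Set.mem_insert_iff, Set.mem_singleton_iff] at h2
  omega

lemma supp_eq_toFinset {n : ℕ} {w : Equiv.Perm ℕ} {t : List ℕ} (ht : IsReducedWord n w t) :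
    supp n w = ↑t.toFinset := by
  ext j
  rw [mem_supp_iff ht]
  simp

lemma sublist_three_split {x y z : ℕ} {t : List ℕ} (h : [x, y, z].Sublist t) :
    ∃ t1 t2, t = t1 ++ y :: t2 ∧ x ∈ t1 ∧ z ∈ t2 := by
  rw [List.cons_sublist_iff] at h
  obtain ⟨r1, r2, rfl, hx, h2⟩ := h
  rw [List.cons_sublist_iff] at h2
  obtain ⟨s1, s2, rfl, hy, h3⟩ := h2
  obtain ⟨u1, u2, rfl⟩ := List.append_of_mem hy
  refine ⟨r1 ++ u1, u2 ++ s2, by simp, by simp [hx], ?_⟩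
  have hz : z ∈ s2 := (List.singleton_sublist).mp h3
  simp [hz]

lemma bruhat_antisymm {n : ℕ} {a b : Equiv.Perm ℕ} (h1 : BruhatLE n a b)
    (h2 : BruhatLE n b a) : a = b :=
  bruhat_eq_of_inv h1 (le_antisymm (bruhat_inv_le h1) (bruhat_inv_le h2))

end NCfix
namespace NCfix

set_option maxHeartbeats 2000000 in
lemma main_key {n : ℕ} {w v : Equiv.Perm ℕ} {i : ℕ} {tv0 : List ℕ}
    (htv0 : IsReducedWord n v tv0)
    (hvw : BruhatLE n v w)
    (hi1 : 1 ≤ i) (hi2 : i ≤ n - 1)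
    (hiv : i ∉ supp n v)
    (hsupp : supp n w = supp n v ∪ {i})
    (e : IdealB n w ≃ Bool × IdealB n v)
    (he : ∀ a b : IdealB n w, IdealLE n w a b ↔
      ((e a).1 ≤ (e b).1 ∧ IdealLE n v (e a).2 (e b).2))
    (IH : ∀ w' v' i', MemSymm n w' → MemSymm n v' → 1 ≤ i' → i' ≤ n - 1 →
      BruhatLE n v' w' → i' ∉ supp n v' → supp n w' = supp n v' ∪ {i'} →
      IsoC2TimesIdeal n w' v' → coxInv n w' < coxInv n w →
      ∀ t, IsReducedWord n w' t → Unconfined i' t)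
    {c : ℕ} (hadj : c = i + 1 ∨ i = c + 1) (hc1 : 1 ≤ c) (hc2 : c ≤ n - 1)
    {s : List ℕ} (hs : IsReducedWord n w s) (hsubcic : [c, i, c].Sublist s) :
    False := by
  classical
  have hrank : ∀ z : IdealB n w, coxInv n z.1 = (cond (e z).1 1 0) + coxInv n (e z).2.1 :=
    rank_formula e he
  have hucw : BruhatLE n (sigmaT c * (sigmaT i * sigmaT c)) w :=
    ⟨[c,i,c], s, reduced_cic hi1 hi2 hc1 hc2 hadj, hs, hsubcic⟩
  set u : Equiv.Perm ℕ := sigmaT c * (sigmaT i * sigmaT c) with hudef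
  set uu : IdealB n w := ⟨u, hucw⟩ with huudef
  have huinv : coxInv n u = 3 := coxInv_cic hi1 hi2 hc1 hc2 hadj
  have hsiu : BruhatLE n (sigmaT i) u :=
    ⟨[i], [c,i,c], reduced_sigma hi1 hi2, reduced_cic hi1 hi2 hc1 hc2 hadj,
      List.singleton_sublist.mpr (by simp)⟩
  have hscu : BruhatLE n (sigmaT c) u :=
    ⟨[c], [c,i,c], reduced_sigma hc1 hc2, reduced_cic hi1 hi2 hc1 hc2 hadj,
      List.singleton_sublist.mpr (by simp)⟩
  have hsiw : BruhatLE n (sigmaT i) w := bruhat_trans hsiu hucw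
  have hscw : BruhatLE n (sigmaT c) w := bruhat_trans hscu hucw
  set sghi : IdealB n w := ⟨sigmaT i, hsiw⟩ with hsghidef
  set sghc : IdealB n w := ⟨sigmaT c, hscw⟩ with hsghcdef
  have hinj : ∀ (p q : Bool × IdealB n v), (e.symm p).1 = (e.symm q).1 → p = q := by
    intro p q hEq
    exact e.symm.injective (Subtype.ext hEq)
  have hsymm_le : ∀ (p : Bool × IdealB n v) (b : IdealB n w),
      (p.1 ≤ (e b).1 ∧ IdealLE n v p.2 (e b).2) → BruhatLE n (e.symm p).1 b.1 := by
    intro p b hcond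
    have h := (he (e.symm p) b).mpr (by rwa [e.apply_symm_apply])
    exact h
  have hic : i ≠ c := by omega
  have hσine : sigmaT i ≠ sigmaT c := fun h => hic (sigma_inj h)
  cases hδu : (e uu).1 with
  | true =>
    -- y := (e uu).2 has coxInv 2, reduced word [p,q]
    have hyinv : coxInv n (e uu).2.1 = 2 := by
      have h := hrank uu
      rw [hδu] at h
      simp only [cond_true] at h
      have h3 : coxInv n uu.1 = 3 := huinv
      omega
    obtain ⟨ry, hry⟩ := red_word_of_le (e uu).2.2
    have hrylen : ry.length = 2 := by rw [reduced_len hry, hyinv]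
    have hex : ∃ p q, ry = [p, q] := by
      match ry, hrylen with
      | [p, q], _ => exact ⟨p, q, rfl⟩
    obtain ⟨p, q, rfl⟩ := hex
    have hbp := hry.1.1 p (by simp)
    have hbq := hry.1.1 q (by simp)
    have hpq : p ≠ q := by
      intro hEq
      subst hEq
      have hone : (e uu).2.1 = 1 := by
        rw [← hry.1.2]
        have : wordProd [p, p] = sigmaT p * sigmaT p := by simp [wordProd]
        rw [this, sig_sq]
      rw [hone, coxInv_one] at hyinv
      omega
    -- three elements below u with coxInv 1
    have hpy : BruhatLE n (sigmaT p) (e uu).2.1 :=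
      ⟨[p], [p,q], reduced_sigma hbp.1 hbp.2, hry, List.singleton_sublist.mpr (by simp)⟩
    have hqy : BruhatLE n (sigmaT q) (e uu).2.1 :=
      ⟨[q], [p,q], reduced_sigma hbq.1 hbq.2, hry, List.singleton_sublist.mpr (by simp)⟩
    have h1y : BruhatLE n 1 (e uu).2.1 := ⟨[], [p,q], reduced_nil, hry, List.nil_sublist _⟩
    have hpv : BruhatLE n (sigmaT p) v := bruhat_trans hpy (e uu).2.2
    have hqv : BruhatLE n (sigmaT q) v := bruhat_trans hqy (e uu).2.2
    have h1v : BruhatLE n 1 v := bruhat_trans h1y (e uu).2.2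
    set P1 : Bool × IdealB n v := (false, ⟨sigmaT p, hpv⟩) with hP1
    set P2 : Bool × IdealB n v := (false, ⟨sigmaT q, hqv⟩) with hP2
    set P3 : Bool × IdealB n v := (true, ⟨1, h1v⟩) with hP3
    have hb1 : BruhatLE n (e.symm P1).1 u := hsymm_le P1 uu ⟨by rw [hδu]; exact Bool.false_le _, hpy⟩
    have hb2 : BruhatLE n (e.symm P2).1 u := hsymm_le P2 uu ⟨by rw [hδu]; exact Bool.false_le _, hqy⟩
    have hb3 : BruhatLE n (e.symm P3).1 u := hsymm_le P3 uu ⟨by rw [hδu], h1y⟩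
    have hr1 : coxInv n (e.symm P1).1 = 1 := by
      have h := hrank (e.symm P1)
      rw [e.apply_symm_apply] at h
      rw [h, hP1]
      simp [coxInv_sigma hbp.1 hbp.2]
    have hr2 : coxInv n (e.symm P2).1 = 1 := by
      have h := hrank (e.symm P2)
      rw [e.apply_symm_apply] at h
      rw [h, hP2]
      simp [coxInv_sigma hbq.1 hbq.2]
    have hr3 : coxInv n (e.symm P3).1 = 1 := by
      have h := hrank (e.symm P3)
      rw [e.apply_symm_apply] at h
      rw [h, hP3]
      simp [coxInv_one]
    -- each is sigmaT i or sigmaT c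
    have hclass : ∀ (z : IdealB n w), BruhatLE n z.1 u → coxInv n z.1 = 1 →
        z.1 = sigmaT i ∨ z.1 = sigmaT c := by
      intro z hzu hz1
      obtain ⟨m, hm1, hm2, hm⟩ := inv_one_eq_sigma (red_word_of_le z.2) hz1
      have hmu : BruhatLE n (sigmaT m) u := by rw [← hm]; exact hzu
      have hmem : m ∈ supp n u := (sigma_le_iff (reduced_cic hi1 hi2 hc1 hc2 hadj) hm1 hm2).mp hmu
      rw [mem_supp_iff (reduced_cic hi1 hi2 hc1 hc2 hadj)] at hmem
      simp at hmem
      rcases hmem with h | h | h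
      · right; rw [hm, h]
      · left; rw [hm, h]
      · right; rw [hm, h]
    have hd1 := hclass (e.symm P1) hb1 hr1
    have hd2 := hclass (e.symm P2) hb2 hr2
    have hd3 := hclass (e.symm P3) hb3 hr3
    have hP12 : P1 ≠ P2 := by
      intro hEq
      rw [hP1, hP2] at hEq
      have := congrArg (fun x => (Prod.snd x).1) hEq
      simp at this
      exact hpq (sigma_inj this)
    have hP13 : P1 ≠ P3 := by
      intro hEq
      have := congrArg Prod.fst hEq
      rw [hP1, hP3] at this
      simp at this
    have hP23 : P2 ≠ P3 := by
      intro hEq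
      have := congrArg Prod.fst hEq
      rw [hP2, hP3] at this
      simp at this
    rcases hd1 with h1 | h1 <;> rcases hd2 with h2 | h2 <;> rcases hd3 with h3 | h3
    · exact hP12 (hinj _ _ (h1.trans h2.symm))
    · exact hP12 (hinj _ _ (h1.trans h2.symm))
    · exact hP13 (hinj _ _ (h1.trans h3.symm))
    · exact hP23 (hinj _ _ (h2.trans h3.symm))
    · exact hP23 (hinj _ _ (h2.trans h3.symm))
    · exact hP13 (hinj _ _ (h1.trans h3.symm))
    · exact hP12 (hinj _ _ (h1.trans h2.symm))
    · exact hP12 (hinj _ _ (h1.trans h2.symm))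
  | false =>
    have hfst_false : ∀ (z : IdealB n w), BruhatLE n z.1 u → (e z).1 = false := by
      intro z hz
      have h := ((he z uu).mp hz).1
      rw [hδu] at h
      exact Bool.eq_false_iff.mpr (fun ht => by rw [ht] at h; exact absurd h (by simp))
    have hδi : (e sghi).1 = false := hfst_false sghi hsiu
    have hδc : (e sghc).1 = false := hfst_false sghc hscu
    have hri : coxInv n (e sghi).2.1 = 1 := by
      have h := hrank sghi
      have h1 : sghi.1 = sigmaT i := rfl
      rw [hδi, h1, coxInv_sigma hi1 hi2] at h
      simpa using h.symm
    have hrc : coxInv n (e sghc).2.1 = 1 := by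
      have h := hrank sghc
      have h1 : sghc.1 = sigmaT c := rfl
      rw [hδc, h1, coxInv_sigma hc1 hc2] at h
      simpa using h.symm
    obtain ⟨m1, hm11, hm12, hm1eq⟩ := inv_one_eq_sigma (red_word_of_le (e sghi).2.2) hri
    obtain ⟨m2, hm21, hm22, hm2eq⟩ := inv_one_eq_sigma (red_word_of_le (e sghc).2.2) hrc
    have hm12ne : m1 ≠ m2 := by
      intro hEq
      have hsz : (e sghi).2 = (e sghc).2 := Subtype.ext (by rw [hm1eq, hEq, ← hm2eq])
      have hEq2 : e sghi = e sghc := Prod.ext (by rw [hδi, hδc]) hsz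
      have hEq3 := e.injective hEq2
      have hEq4 : sigmaT i = sigmaT c := congrArg Subtype.val hEq3
      exact hσine hEq4
    set vvw : IdealB n w := ⟨v, hvw⟩ with hvvwdef
    cases hδv : (e vvw).1 with
    | false =>
      have hxinv : coxInv n (e vvw).2.1 = coxInv n v := by
        have h := hrank vvw
        have h1 : vvw.1 = v := rfl
        rw [hδv, h1] at h
        simpa using h.symm
      have h1v : BruhatLE n 1 v := ⟨[], tv0, reduced_nil, htv0, List.nil_sublist _⟩
      set g : IdealB n w := e.symm (true, ⟨1, h1v⟩) with hgdef
      have hge : e g = (true, ⟨1, h1v⟩) := e.apply_symm_apply _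
      have hginv : coxInv n g.1 = 1 := by
        rw [hrank g, hge]
        simp [coxInv_one]
      obtain ⟨j0, hj01, hj02, hj0⟩ := inv_one_eq_sigma (red_word_of_le g.2) hginv
      have hj0w : BruhatLE n (sigmaT j0) w := by rw [← hj0]; exact g.2
      have hj0supp : j0 ∈ supp n w := (sigma_le_iff hs hj01 hj02).mp hj0w
      rw [hsupp] at hj0supp
      rcases hj0supp with hj0v | hj0i
      · have hj0lev : BruhatLE n (sigmaT j0) v := (sigma_le_iff htv0 hj01 hj02).mpr hj0v
        have hgl : IdealLE n w g vvw := by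
          show BruhatLE n g.1 v
          rw [hj0]
          exact hj0lev
        have h := ((he g vvw).mp hgl).1
        rw [hge, hδv] at h
        exact absurd h (by simp)
      · have hj0eq : j0 = i := hj0i
        have hgeqi : sghi = g := Subtype.ext (by
          show sigmaT i = g.1
          rw [hj0, hj0eq])
        have h : (e sghi).1 = true := by rw [hgeqi, hge]
        rw [hδi] at h
        exact absurd h (by simp)
    | true =>
      set xv : IdealB n v := (e vvw).2 with hxvdef
      have hevvw : e vvw = (true, xv) := Prod.ext hδv rfl
      have hxvinv : coxInv n xv.1 + 1 = coxInv n v := by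
        have h := hrank vvw
        have h1 : vvw.1 = v := rfl
        rw [hδv, h1, ← hxvdef] at h
        simp only [cond_true] at h
        omega
      have hm1v : BruhatLE n (sigmaT m1) v := by rw [← hm1eq]; exact (e sghi).2.2
      have hm1suppv : m1 ∈ supp n v := (sigma_le_iff htv0 hm11 hm12).mp hm1v
      have hm1x : ¬ BruhatLE n (sigmaT m1) xv.1 := by
        intro hle
        have hcond : ((e sghi).1 ≤ (e vvw).1 ∧ IdealLE n v (e sghi).2 (e vvw).2) := by
          constructor
          · rw [hδi]; exact Bool.false_le _
          · show BruhatLE n (e sghi).2.1 xv.1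
            rw [hm1eq]
            exact hle
        have h := (he sghi vvw).mpr hcond
        have h2 : BruhatLE n (sigmaT i) v := h
        exact hiv ((sigma_le_iff htv0 hi1 hi2).mp h2)
      obtain ⟨tx, htx⟩ := red_word_of_le xv.2
      have hm1suppx : m1 ∉ supp n xv.1 := fun hmem =>
        hm1x ((sigma_le_iff htx hm11 hm12).mpr hmem)
      -- counting: supp v = supp xv ∪ {m1}
      have hSxSv : tx.toFinset ⊆ tv0.toFinset := by
        intro j hj
        have h1 : j ∈ supp n xv.1 := (mem_supp_iff htx).mpr (by simpa using hj)
        have h2 := supp_mono xv.2 h1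
        rw [supp_eq_toFinset htv0] at h2
        simpa using h2
      have hm1Sv : m1 ∈ tv0.toFinset := by
        have h := hm1suppv
        rw [supp_eq_toFinset htv0] at h
        simpa using h
      have hm1Sx : m1 ∉ tx.toFinset := by
        intro hmem
        exact hm1suppx ((mem_supp_iff htx).mpr (by simpa using hmem))
      have hwm : ∀ j ∈ tv0.toFinset, BruhatLE n (sigmaT j) w := by
        intro j hj
        have hb := htv0.1.1 j (by simpa using hj)
        have h1 : j ∈ supp n v := (mem_supp_iff htv0).mpr (by simpa using hj)
        exact bruhat_trans ((sigma_le_iff htv0 hb.1 hb.2).mpr h1) hvw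
      set F : ℕ → ℕ := fun j =>
        if h : BruhatLE n (sigmaT j) w then
          (if (e ⟨sigmaT j, h⟩).1 then m1 else letterOf (e ⟨sigmaT j, h⟩).2.1)
        else 0 with hFdef
      have hjdata : ∀ j ∈ tv0.toFinset, ∀ (h : BruhatLE n (sigmaT j) w),
          ((e ⟨sigmaT j, h⟩).1 = true ∧ (e ⟨sigmaT j, h⟩).2.1 = 1) ∨
          ((e ⟨sigmaT j, h⟩).1 = false ∧ (e ⟨sigmaT j, h⟩).2.1 = sigmaT (letterOf (e ⟨sigmaT j, h⟩).2.1) ∧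
            BruhatLE n (e ⟨sigmaT j, h⟩).2.1 xv.1 ∧ 1 ≤ letterOf (e ⟨sigmaT j, h⟩).2.1 ∧
            letterOf (e ⟨sigmaT j, h⟩).2.1 ≤ n - 1) := by
        intro j hj h
        have hb := htv0.1.1 j (by simpa using hj)
        have hjv : BruhatLE n (sigmaT j) v :=
          (sigma_le_iff htv0 hb.1 hb.2).mpr ((mem_supp_iff htv0).mpr (by simpa using hj))
        have hlex : BruhatLE n (e ⟨sigmaT j, h⟩).2.1 xv.1 := by
          have hcond := (he ⟨sigmaT j, h⟩ vvw).mp (show BruhatLE n (sigmaT j) v from hjv)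
          exact hcond.2
        have hrk := hrank ⟨sigmaT j, h⟩
        have h1 : (⟨sigmaT j, h⟩ : IdealB n w).1 = sigmaT j := rfl
        rw [h1, coxInv_sigma hb.1 hb.2] at hrk
        cases hδj : (e ⟨sigmaT j, h⟩).1 with
        | true =>
          left
          rw [hδj] at hrk
          simp only [cond_true] at hrk
          exact ⟨rfl, inv_zero_eq_one (red_word_of_le (e ⟨sigmaT j, h⟩).2.2) (by omega)⟩
        | false =>
          right
          rw [hδj] at hrk
          simp only [cond_false] at hrk
          obtain ⟨m, hmb1, hmb2, hm⟩ :=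
            inv_one_eq_sigma (red_word_of_le (e ⟨sigmaT j, h⟩).2.2) (by omega)
          have hlet : letterOf (e ⟨sigmaT j, h⟩).2.1 = m := by rw [hm, letterOf_sigma]
          refine ⟨rfl, by rw [hlet, ← hm], hlex, by omega, by omega⟩
      have hFmem : ∀ j ∈ tv0.toFinset, F j ∈ insert m1 tx.toFinset := by
        intro j hj
        have h := hwm j hj
        rw [hFdef]
        simp only [dif_pos h]
        rcases hjdata j hj h with ⟨hf, _⟩ | ⟨hf, hsig, hlex, hb1, hb2⟩
        · rw [hf]; simp
        · have hmemx : letterOf (e ⟨sigmaT j, h⟩).2.1 ∈ tx.toFinset := by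
            have h2 : letterOf (e ⟨sigmaT j, h⟩).2.1 ∈ supp n xv.1 := by
              apply (sigma_le_iff htx hb1 hb2).mp
              rw [← hsig]
              exact hlex
            rw [mem_supp_iff htx] at h2
            simpa using h2
          rw [hf]
          simp [hmemx]
      have hFinj : Set.InjOn F ↑tv0.toFinset := by
        intro j hj j' hj' hEq
        have h := hwm j hj
        have h' := hwm j' hj'
        rw [hFdef] at hEq
        simp only [dif_pos h, dif_pos h'] at hEq
        rcases hjdata j hj h with ⟨hf, hv1⟩ | ⟨hf, hsig, hlex, hb1, hb2⟩ <;>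
          rcases hjdata j' hj' h' with ⟨hf', hv1'⟩ | ⟨hf', hsig', hlex', hb1', hb2'⟩
        · -- both true: e-values equal
          have hEq2 : e ⟨sigmaT j, h⟩ = e ⟨sigmaT j', h'⟩ :=
            Prod.ext (by rw [hf, hf']) (Subtype.ext (by rw [hv1, hv1']))
          have := congrArg Subtype.val (e.injective hEq2)
          exact sigma_inj this
        · exfalso
          rw [if_pos hf, if_neg (by rw [hf']; simp)] at hEq
          apply hm1suppx
          rw [hEq]
          apply (sigma_le_iff htx hb1' hb2').mp
          rw [← hsig']
          exact hlex'
        · exfalso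
          rw [if_neg (by rw [hf]; simp), if_pos hf'] at hEq
          apply hm1suppx
          rw [← hEq]
          apply (sigma_le_iff htx hb1 hb2).mp
          rw [← hsig]
          exact hlex
        · rw [if_neg (by rw [hf]; simp), if_neg (by rw [hf']; simp)] at hEq
          have hEq2 : e ⟨sigmaT j, h⟩ = e ⟨sigmaT j', h'⟩ :=
            Prod.ext (by rw [hf, hf']) (Subtype.ext (by rw [hsig, hsig', hEq]))
          have := congrArg Subtype.val (e.injective hEq2)
          exact sigma_inj this
      have hcard : tv0.toFinset.card ≤ (insert m1 tx.toFinset).card :=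
        Finset.card_le_card_of_injOn F hFmem hFinj
      have hins_sub : insert m1 tx.toFinset ⊆ tv0.toFinset := by
        intro j hj
        rcases Finset.mem_insert.mp hj with rfl | hj2
        · exact hm1Sv
        · exact hSxSv hj2
      have hSveq : insert m1 tx.toFinset = tv0.toFinset :=
        Finset.eq_of_subset_of_card_le hins_sub hcard
      have hsuppveq : supp n v = supp n xv.1 ∪ {m1} := by
        rw [supp_eq_toFinset htv0, supp_eq_toFinset htx, ← hSveq]
        ext j
        simp only [Finset.coe_insert, Set.mem_insert_iff, Set.mem_union, Set.mem_singleton_iff,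
          Finset.mem_coe]
        tauto
      -- supp of yu
      have hyu3 : coxInv n (e uu).2.1 = 3 := by
        have h := hrank uu
        have h1 : uu.1 = u := rfl
        rw [hδu, h1, huinv] at h
        simpa using h.symm
      obtain ⟨tyu, htyu⟩ := red_word_of_le (e uu).2.2
      have hm1yu : BruhatLE n (sigmaT m1) (e uu).2.1 := by
        have h := (he sghi uu).mp (show BruhatLE n (sigmaT i) u from hsiu)
        have h2 := h.2
        show BruhatLE n (sigmaT m1) (e uu).2.1
        rw [← hm1eq]
        exact h2
      have hm2yu : BruhatLE n (sigmaT m2) (e uu).2.1 := by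
        have h := (he sghc uu).mp (show BruhatLE n (sigmaT c) u from hscu)
        have h2 := h.2
        show BruhatLE n (sigmaT m2) (e uu).2.1
        rw [← hm2eq]
        exact h2
      have hyuletters : ∀ j, j ∈ supp n (e uu).2.1 → j = m1 ∨ j = m2 := by
        intro j hjsupp
        have hbj := supp_letter_bounds hjsupp
        have hjyu : BruhatLE n (sigmaT j) (e uu).2.1 :=
          (sigma_le_iff htyu hbj.1 hbj.2).mpr hjsupp
        have hjv : BruhatLE n (sigmaT j) v := bruhat_trans hjyu (e uu).2.2
        set zz := e.symm (false, ⟨sigmaT j, hjv⟩) with hzzdef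
        have hezz : e zz = (false, ⟨sigmaT j, hjv⟩) := e.apply_symm_apply _
        have hzzu : BruhatLE n zz.1 u := hsymm_le _ uu ⟨by rw [hδu], hjyu⟩
        have hzzinv : coxInv n zz.1 = 1 := by
          rw [hrank zz, hezz]
          simp [coxInv_sigma hbj.1 hbj.2]
        obtain ⟨m', hm'1, hm'2, hm'⟩ := inv_one_eq_sigma (red_word_of_le zz.2) hzzinv
        have hm'u : BruhatLE n (sigmaT m') u := by rw [← hm']; exact hzzu
        have hm'mem : m' ∈ supp n u :=
          (sigma_le_iff (reduced_cic hi1 hi2 hc1 hc2 hadj) hm'1 hm'2).mp hm'u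
        rw [mem_supp_iff (reduced_cic hi1 hi2 hc1 hc2 hadj)] at hm'mem
        simp at hm'mem
        have hm'ic : m' = i ∨ m' = c := by tauto
        rcases hm'ic with hmi | hmc
        · left
          have hzi : zz = sghi := Subtype.ext (by rw [hm', hmi])
          have h1 : (false, (⟨sigmaT j, hjv⟩ : IdealB n v)) = e sghi := by rw [← hzi, hezz]; rfl
          have h2 : sigmaT j = (e sghi).2.1 := by rw [← h1]
          rw [hm1eq] at h2
          exact sigma_inj h2
        · right
          have hzi : zz = sghc := Subtype.ext (by rw [hm', hmc])
          have h1 : (false, (⟨sigmaT j, hjv⟩ : IdealB n v)) = e sghc := by rw [← hzi, hezz]; rfl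
          have h2 : sigmaT j = (e sghc).2.1 := by rw [← h1]
          rw [hm2eq] at h2
          exact sigma_inj h2
      have hyulet' : ∀ j ∈ tyu, j = m1 ∨ j = m2 := fun j hj =>
        hyuletters j ((mem_supp_iff htyu).mpr hj)
      have hcls := three_word_classify hm11 hm12 hm21 hm22 hm12ne htyu hyu3 hyulet'
      have hadj2 := hcls.1
      -- length bound
      have hvltw : coxInv n v < coxInv n w := by
        have hne : v ≠ w := by
          intro hEq
          apply hiv
          have hiw : i ∈ supp n w := (mem_supp_iff hs).mpr (hsubcic.subset (by simp))
          rw [← hEq] at hiw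
          exact hiw
        have hle := bruhat_inv_le hvw
        have hneq : coxInv n v ≠ coxInv n w := fun hEq => hne (bruhat_eq_of_inv hvw hEq)
        omega
      -- iso E : IdealB n v ≃ Bool × IdealB n xv.1
      have hiso2 : IsoC2TimesIdeal n v xv.1 := by
        refine ⟨{
          toFun := fun z =>
            ((e ⟨z.1, bruhat_trans z.2 hvw⟩).1,
             ⟨(e ⟨z.1, bruhat_trans z.2 hvw⟩).2.1,
              ((he ⟨z.1, bruhat_trans z.2 hvw⟩ vvw).mp (show BruhatLE n z.1 v from z.2)).2⟩)
          invFun := fun p =>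
            ⟨(e.symm (p.1, ⟨p.2.1, bruhat_trans p.2.2 xv.2⟩)).1, by
              have h := (he (e.symm (p.1, ⟨p.2.1, bruhat_trans p.2.2 xv.2⟩)) vvw).mpr (by
                rw [e.apply_symm_apply, hevvw]
                exact ⟨Bool.le_true _, p.2.2⟩)
              exact h⟩
          left_inv := fun z => Subtype.ext (by
            show (e.symm _).1 = z.1
            have hpair : ((e ⟨z.1, bruhat_trans z.2 hvw⟩).1,
                (⟨(e ⟨z.1, bruhat_trans z.2 hvw⟩).2.1, _⟩ : IdealB n v)) =
                e ⟨z.1, bruhat_trans z.2 hvw⟩ := Prod.ext rfl (Subtype.ext rfl)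
            exact (congrArg (fun p => (e.symm p).1) hpair).trans (congrArg Subtype.val (e.symm_apply_apply _)))
          right_inv := fun p => by
            have hsub : (⟨(e.symm (p.1, ⟨p.2.1, bruhat_trans p.2.2 xv.2⟩)).1, _⟩ : IdealB n w) =
                e.symm (p.1, ⟨p.2.1, bruhat_trans p.2.2 xv.2⟩) := Subtype.ext rfl
            apply Prod.ext
            · show (e _).1 = p.1
              rw [hsub, e.apply_symm_apply]
            · apply Subtype.ext
              show (e _).2.1 = p.2.1
              rw [hsub, e.apply_symm_apply] }, ?_⟩
        intro a b
        exact he ⟨a.1, bruhat_trans a.2 hvw⟩ ⟨b.1, bruhat_trans b.2 hvw⟩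
      have hUC := IH v xv.1 m1 (memsymm_of_reduced htv0) (memsymm_of_reduced htx)
        hm11 hm12 xv.2 hm1suppx hsuppveq hiso2 hvltw
      have hUCv := hUC tv0 htv0
      -- final blow
      obtain ⟨ru, hru, hru_sub⟩ := bruhat_all (e uu).2.2 htv0
      have hrulet : ∀ j ∈ ru, j = m1 ∨ j = m2 := by
        intro j hj
        exact hyuletters j ⟨ru, hru, hj⟩
      have hcls2 := three_word_classify hm11 hm12 hm21 hm22 hm12ne hru hyu3 hrulet
      rcases hcls2.2 with hpat | hpat
      · rw [hpat] at hru_sub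
        have h2 : [m1, m1].Sublist [m1, m2, m1] := by
          apply List.Sublist.cons₂
          apply List.Sublist.cons
          exact List.Sublist.refl _
        have h3 := (h2.trans hru_sub).count_le m1
        have h4 : [m1, m1].count m1 = 2 := by simp
        rw [h4] at h3
        have h5 := hUCv.1
        omega
      · rw [hpat] at hru_sub
        obtain ⟨t1, t2, hdec, hmem1, hmem2⟩ := sublist_three_split hru_sub
        have hcc := hUCv.2 t1 t2 hdec
        rcases hadj2 with hA | hA
        · exact hcc.1 ⟨by rw [← hA]; exact hmem1, by rw [← hA]; exact hmem2⟩
        · have hsubeq : m1 - 1 = m2 := by omega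
          exact hcc.2 ⟨by rw [hsubeq]; exact hmem1, by rw [hsubeq]; exact hmem2⟩

end NCfix
/-- if B(w) ≅ C₂ × B(v) with supp(w) = supp(v) ∪ {i} and i ∉ supp(v),
then i is unconfined in every reduced word of w. -/
theorem no_confines (n : ℕ) (w v : Equiv.Perm ℕ)
    (hw : MemSymm n w) (hv : MemSymm n v) (i : ℕ)
    (hi1 : 1 ≤ i) (hi2 : i ≤ n - 1)
    (hvw : BruhatLE n v w)
    (hiv : i ∉ supp n v)
    (hsupp : supp n w = supp n v ∪ {i})
    (hiso : IsoC2TimesIdeal n w v) :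
    ∀ s : List ℕ, IsReducedWord n w s → Unconfined i s := by
  suffices H : ∀ N n (w v : Equiv.Perm ℕ) i, MemSymm n w → MemSymm n v → 1 ≤ i → i ≤ n - 1 →
      BruhatLE n v w → i ∉ supp n v → supp n w = supp n v ∪ {i} →
      IsoC2TimesIdeal n w v → NCfix.coxInv n w ≤ N →
      ∀ s, IsReducedWord n w s → Unconfined i s by
    exact fun s hs =>
      H (NCfix.coxInv n w) n w v i hw hv hi1 hi2 hvw hiv hsupp hiso (le_refl _) s hs
  clear hw hv hi1 hi2 hvw hiv hsupp hiso
  intro N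
  induction N with
  | zero =>
    intro n w v i hw hv hi1 hi2 hvw hiv hsupp hiso hN s hs
    exfalso
    have hisupp : i ∈ supp n w := by rw [hsupp]; exact Set.mem_union_right _ rfl
    have himem : i ∈ s := (NCfix.mem_supp_iff hs).mp hisupp
    have hl : s.length = 0 := by
      have := NCfix.reduced_len hs
      omega
    rw [List.length_eq_zero_iff] at hl
    subst hl
    simp at himem
  | succ N IHN =>
    intro n w v i hw hv hi1 hi2 hvw hiv hsupp hiso hN s hs
    obtain ⟨e, he⟩ := hiso
    have hisupp : i ∈ supp n w := by rw [hsupp]; exact Set.mem_union_right _ rfl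
    have himem : i ∈ s := (NCfix.mem_supp_iff hs).mp hisupp
    obtain ⟨tv0, tw0', htv0, htw0', hsub0⟩ := hvw
    have hvw' : BruhatLE n v w := ⟨tv0, tw0', htv0, htw0', hsub0⟩
    obtain ⟨rv, hrv, hrvsub⟩ := NCfix.bruhat_all hvw' hs
    have hlenv : rv.length = NCfix.coxInv n v := NCfix.reduced_len hrv
    have hlens : s.length = NCfix.coxInv n w := NCfix.reduced_len hs
    have hwrefl : BruhatLE n w w := NCfix.bruhat_refl hs
    have hvrefl : BruhatLE n v v := NCfix.bruhat_refl htv0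
    have hrank := NCfix.rank_formula e he
    have htop : e ⟨w, hwrefl⟩ = (true, ⟨v, hvrefl⟩) := by
      have hmax : ∀ p : Bool × IdealB n v,
          p.1 ≤ (e ⟨w, hwrefl⟩).1 ∧ IdealLE n v p.2 (e ⟨w, hwrefl⟩).2 := by
        intro p
        have h1 : IdealLE n w (e.symm p) ⟨w, hwrefl⟩ := (e.symm p).2
        have h2 := (he (e.symm p) ⟨w, hwrefl⟩).mp h1
        rwa [e.apply_symm_apply] at h2
      have h4 := hmax (true, ⟨v, hvrefl⟩)
      have hfst : (e ⟨w, hwrefl⟩).1 = true := by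
        have h5 := h4.1
        cases hb : (e ⟨w, hwrefl⟩).1
        · rw [hb] at h5; exact absurd h5 (by simp)
        · rfl
      have hsnd : (e ⟨w, hwrefl⟩).2 = ⟨v, hvrefl⟩ := by
        apply Subtype.ext
        apply NCfix.bruhat_antisymm
        · exact (e ⟨w, hwrefl⟩).2.2
        · exact h4.2
      exact Prod.ext hfst hsnd
    have hinvwv : NCfix.coxInv n w = NCfix.coxInv n v + 1 := by
      have h := hrank ⟨w, hwrefl⟩
      rw [htop] at h
      simp only [cond_true] at h
      omega
    obtain ⟨A, x, B, hsdec, hrveq⟩ := NCfix.sublist_length_pred hrvsub (by omega)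
    have hirv : i ∉ rv := fun hmem => hiv ⟨rv, hrv, hmem⟩
    have hiA : i ∉ A := fun h => hirv (by rw [hrveq]; exact List.mem_append.mpr (Or.inl h))
    have hiB : i ∉ B := fun h => hirv (by rw [hrveq]; exact List.mem_append.mpr (Or.inr h))
    have hcount : s.count i = 1 := by
      have hxi : x = i := by
        rw [hsdec] at himem
        rcases List.mem_append.mp himem with h | h
        · exact absurd h hiA
        · rcases List.mem_cons.mp h with h' | h'
          · exact h'.symm
          · exact absurd h' hiB
      rw [hsdec, hxi]
      have hA0 : A.count i = 0 := List.count_eq_zero.mpr hiA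
      have hB0 : B.count i = 0 := List.count_eq_zero.mpr hiB
      simp [List.count_append, List.count_cons, hA0, hB0]
    refine ⟨hcount, ?_⟩
    intro a b hab
    have hIH : ∀ (w' v' : Equiv.Perm ℕ) (i' : ℕ), MemSymm n w' → MemSymm n v' →
        1 ≤ i' → i' ≤ n - 1 → BruhatLE n v' w' → i' ∉ supp n v' →
        supp n w' = supp n v' ∪ {i'} → IsoC2TimesIdeal n w' v' →
        NCfix.coxInv n w' < NCfix.coxInv n w →
        ∀ t, IsReducedWord n w' t → Unconfined i' t := by
      intro w' v' i' hw' hv' h1 h2 h3 h4 h5 h6 hlt t ht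
      exact IHN n w' v' i' hw' hv' h1 h2 h3 h4 h5 h6 (by omega) t ht
    constructor
    · rintro ⟨hc1, hc2⟩
      have hcs : (i+1) ∈ s := by rw [hab]; exact List.mem_append.mpr (Or.inl hc1)
      have hcb := hs.1.1 (i+1) hcs
      have hsubcic : [i+1, i, i+1].Sublist s := by
        rw [hab]
        have h1 : [i+1].Sublist a := List.singleton_sublist.mpr hc1
        have h2 : [i, i+1].Sublist (i :: b) :=
          List.Sublist.cons₂ _ (List.singleton_sublist.mpr hc2)
        exact h1.append h2
      exact NCfix.main_key htv0 hvw' hi1 hi2 hiv hsupp e he hIH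
        (Or.inl rfl) hcb.1 hcb.2 hs hsubcic
    · rintro ⟨hc1, hc2⟩
      have hcs : (i-1) ∈ s := by rw [hab]; exact List.mem_append.mpr (Or.inl hc1)
      have hcb := hs.1.1 (i-1) hcs
      have hadj : (i-1) = i + 1 ∨ i = (i-1) + 1 := Or.inr (by omega)
      have hsubcic : [i-1, i, i-1].Sublist s := by
        rw [hab]
        have h1 : [i-1].Sublist a := List.singleton_sublist.mpr hc1
        have h2 : [i, i-1].Sublist (i :: b) :=
          List.Sublist.cons₂ _ (List.singleton_sublist.mpr hc2)
        exact h1.append h2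
      exact NCfix.main_key htv0 hvw' hi1 hi2 hiv hsupp e he hIH
        hadj hcb.1 hcb.2 hs hsubcic
end

section
/- Let w ∈ S_n and suppose i ∈ supp(w) is unconfined in every reduced word of w. Then for every permutation u with u ⪯ w in Bruhat order, either i ∉ supp(u), or i is unconfined in every reduced word of u. -/
namespace Aux

lemma sigmaT_apply (j x : ℕ) : sigmaT j x = if x = j then j+1 else if x = j+1 then j else x := by
  simp [sigmaT, Equiv.swap_apply_def]

lemma sigmaT_mul_self (j : ℕ) : sigmaT j * sigmaT j = 1 := Equiv.swap_mul_self _ _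

set_option maxHeartbeats 1000000 in
lemma sigmaT_comm {j k : ℕ} (h : j + 2 ≤ k ∨ k + 2 ≤ j) :
    sigmaT j * sigmaT k = sigmaT k * sigmaT j := by
  ext x
  simp only [Equiv.Perm.mul_apply, sigmaT_apply]
  split_ifs <;> omega

set_option maxHeartbeats 1000000 in
lemma sigmaT_braid (j : ℕ) :
    sigmaT j * sigmaT (j+1) * sigmaT j = sigmaT (j+1) * sigmaT j * sigmaT (j+1) := by
  ext x
  simp only [Equiv.Perm.mul_apply, sigmaT_apply]
  split_ifs <;> omega

/-- The set of inversions of `v` inside `[1,n]`. -/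
def invSet (n : ℕ) (v : Equiv.Perm ℕ) : Finset (ℕ × ℕ) :=
  (Finset.Icc 1 n ×ˢ Finset.Icc 1 n).filter (fun p => p.1 < p.2 ∧ v p.2 < v p.1)

def invCount (n : ℕ) (v : Equiv.Perm ℕ) : ℕ := (invSet n v).card

lemma invCount_one (n : ℕ) : invCount n 1 = 0 := by
  have : invSet n 1 = ∅ := by
    ext p
    simp only [invSet, Finset.mem_filter, Finset.notMem_empty, iff_false, not_and]
    simp only [Equiv.Perm.one_apply]
    intro _ h
    omega
  simp [invCount, this]

/-- Key step lemma: right multiplication by `sigmaT j` changes `invCount` by one. -/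
lemma invCount_step (n j : ℕ) (hj1 : 1 ≤ j) (hjn : j + 1 ≤ n) (v : Equiv.Perm ℕ) :
    (v j < v (j+1) → invCount n (v * sigmaT j) = invCount n v + 1) ∧
    (v (j+1) < v j → invCount n (v * sigmaT j) + 1 = invCount n v) := by
  have hcard : ((invSet n (v * sigmaT j)).erase (j, j+1)).card
      = ((invSet n v).erase (j, j+1)).card := by
    apply Finset.card_bij' (fun p _ => (sigmaT j p.1, sigmaT j p.2))
      (fun p _ => (sigmaT j p.1, sigmaT j p.2))
    · intro p hp
      simp only [Finset.mem_erase, invSet, Finset.mem_filter, Finset.mem_product,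
        Finset.mem_Icc] at hp ⊢
      simp only [Equiv.Perm.mul_apply] at hp ⊢
      obtain ⟨hne, ⟨⟨h1, h2⟩, h3, h4⟩⟩ := hp
      have hne' : ¬(p.1 = j ∧ p.2 = j + 1) := by
        intro h; exact hne (Prod.ext h.1 h.2)
      refine ⟨?_, ⟨?_, ?_⟩, ?_, ?_⟩
      · intro h
        have e1 : sigmaT j p.1 = j := congrArg Prod.fst h
        have e2 : sigmaT j p.2 = j + 1 := congrArg Prod.snd h
        rw [sigmaT_apply] at e1 e2
        split_ifs at e1 e2 <;> omega
      · rw [sigmaT_apply]; split_ifs <;> omega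
      · rw [sigmaT_apply]; split_ifs <;> omega
      · rw [sigmaT_apply, sigmaT_apply]; split_ifs <;> omega
      · exact h4
    · intro p hp
      simp only [Finset.mem_erase, invSet, Finset.mem_filter, Finset.mem_product,
        Finset.mem_Icc] at hp ⊢
      simp only [Equiv.Perm.mul_apply] at hp ⊢
      obtain ⟨hne, ⟨⟨h1, h2⟩, h3, h4⟩⟩ := hp
      have hne' : ¬(p.1 = j ∧ p.2 = j + 1) := by
        intro h; exact hne (Prod.ext h.1 h.2)
      have hs1 : sigmaT j (sigmaT j p.1) = p.1 := by
        rw [sigmaT_apply, sigmaT_apply]; split_ifs <;> omega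
      have hs2 : sigmaT j (sigmaT j p.2) = p.2 := by
        rw [sigmaT_apply, sigmaT_apply]; split_ifs <;> omega
      refine ⟨?_, ⟨?_, ?_⟩, ?_, ?_⟩
      · intro h
        have e1 : sigmaT j p.1 = j := congrArg Prod.fst h
        have e2 : sigmaT j p.2 = j + 1 := congrArg Prod.snd h
        rw [sigmaT_apply] at e1 e2
        split_ifs at e1 e2 <;> omega
      · rw [sigmaT_apply]; split_ifs <;> omega
      · rw [sigmaT_apply]; split_ifs <;> omega
      · rw [sigmaT_apply, sigmaT_apply]; split_ifs <;> omega
      · rw [hs1, hs2]; exact h4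
    · intro p hp
      ext
      · simp only; rw [sigmaT_apply, sigmaT_apply]; split_ifs <;> omega
      · simp only; rw [sigmaT_apply, sigmaT_apply]; split_ifs <;> omega
    · intro p hp
      ext
      · simp only; rw [sigmaT_apply, sigmaT_apply]; split_ifs <;> omega
      · simp only; rw [sigmaT_apply, sigmaT_apply]; split_ifs <;> omega
  have hmemv : (j, j+1) ∈ invSet n v ↔ v (j+1) < v j := by
    simp only [invSet, Finset.mem_filter, Finset.mem_product, Finset.mem_Icc]
    constructor
    · rintro ⟨-, -, h⟩; exact h
    · intro h; exact ⟨⟨⟨by omega, by omega⟩, by omega, hjn⟩, by omega, h⟩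
  have hmemv' : (j, j+1) ∈ invSet n (v * sigmaT j) ↔ v j < v (j+1) := by
    simp only [invSet, Finset.mem_filter, Finset.mem_product, Finset.mem_Icc]
    simp only [Equiv.Perm.mul_apply]
    have e1 : sigmaT j j = j + 1 := by rw [sigmaT_apply]; split_ifs <;> omega
    have e2 : sigmaT j (j+1) = j := by rw [sigmaT_apply]; split_ifs <;> omega
    rw [e1, e2]
    constructor
    · rintro ⟨-, -, h⟩; exact h
    · intro h; exact ⟨⟨⟨by omega, by omega⟩, by omega, hjn⟩, by omega, h⟩
  constructor
  · intro hlt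
    have h1 : (j, j+1) ∈ invSet n (v * sigmaT j) := hmemv'.2 hlt
    have h2 : (j, j+1) ∉ invSet n v := by rw [hmemv]; omega
    have := Finset.card_erase_of_mem h1
    have hpos : 0 < (invSet n (v * sigmaT j)).card := Finset.card_pos.mpr ⟨_, h1⟩
    rw [Finset.erase_eq_of_notMem h2] at hcard
    unfold invCount
    omega
  · intro hlt
    have h1 : (j, j+1) ∉ invSet n (v * sigmaT j) := by rw [hmemv']; omega
    have h2 : (j, j+1) ∈ invSet n v := hmemv.2 hlt
    have := Finset.card_erase_of_mem h2
    have hpos : 0 < (invSet n v).card := Finset.card_pos.mpr ⟨_, h2⟩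
    rw [Finset.erase_eq_of_notMem h1] at hcard
    unfold invCount
    omega

end Aux

namespace Aux

lemma letter_bound {n j : ℕ} (h : 1 ≤ j ∧ j ≤ n - 1) : 1 ≤ j ∧ j + 1 ≤ n := by omega

lemma wordProd_nil : wordProd [] = 1 := rfl

lemma wordProd_append (s t : List ℕ) : wordProd (s ++ t) = wordProd s * wordProd t := by
  simp [wordProd]

lemma wordProd_concat (s : List ℕ) (j : ℕ) : wordProd (s ++ [j]) = wordProd s * sigmaT j := by
  simp [wordProd]

lemma sigmaT_fix {n j x : ℕ} (hj : 1 ≤ j ∧ j + 1 ≤ n) (hx : x ∉ Set.Icc 1 n) :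
    sigmaT j x = x := by
  simp only [Set.mem_Icc, not_and, not_le] at hx
  rw [sigmaT_apply]
  split_ifs <;> omega

lemma memSymm_wordProd {n : ℕ} {s : List ℕ} (hs : ∀ j ∈ s, 1 ≤ j ∧ j ≤ n - 1) :
    MemSymm n (wordProd s) := by
  induction s with
  | nil => intro x _; rfl
  | cons j t ih =>
    intro x hx
    have : wordProd (j :: t) = sigmaT j * wordProd t := by simp [wordProd]
    rw [this, Equiv.Perm.mul_apply, ih (fun a ha => hs a (List.mem_cons_of_mem _ ha)) x hx,
      sigmaT_fix (letter_bound (hs j List.mem_cons_self)) hx]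

lemma memSymm_inv {n : ℕ} {v : Equiv.Perm ℕ} (hv : MemSymm n v) : MemSymm n v⁻¹ := by
  intro x hx
  have := hv x hx
  conv_lhs => rw [← this]
  simp

lemma memSymm_mapsTo {n : ℕ} {v : Equiv.Perm ℕ} (hv : MemSymm n v) {x : ℕ}
    (hx : x ∈ Set.Icc 1 n) : v x ∈ Set.Icc 1 n := by
  by_contra h
  have := hv (v x) h
  have := v.injective this
  rw [← this] at hx
  exact h hx

lemma eq_one_of_invCount_zero {n : ℕ} {v : Equiv.Perm ℕ} (hv : MemSymm n v)
    (h : invCount n v = 0) : v = 1 := by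
  have hempty : ∀ a b, 1 ≤ a → b ≤ n → a < b → v a < v b := by
    intro a b ha hb hab
    have hmem : (a, b) ∉ invSet n v := by
      intro hm
      have : invSet n v = ∅ := Finset.card_eq_zero.mp h
      rw [this] at hm
      exact absurd hm (Finset.notMem_empty _)
    simp only [invSet, Finset.mem_filter, Finset.mem_product, Finset.mem_Icc] at hmem
    have hva : v a ≠ v b := fun e => by have := v.injective e; omega
    by_contra hc
    exact hmem ⟨⟨⟨ha, by omega⟩, by omega, hb⟩, hab, by omega⟩
  -- v x ≥ x on Icc
  have hge : ∀ w : Equiv.Perm ℕ, MemSymm n w → (∀ a b, 1 ≤ a → b ≤ n → a < b → w a < w b) →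
      ∀ x, 1 ≤ x → x ≤ n → x ≤ w x := by
    intro w hw hmono x
    induction x with
    | zero => omega
    | succ y ih =>
      intro h1 h2
      rcases Nat.eq_or_lt_of_le h1 with h | h
      · have : w (y+1) ∈ Set.Icc 1 n := memSymm_mapsTo hw (by simp; omega)
        simp at this; omega
      · have hy := ih (by omega) (by omega)
        have := hmono y (y+1) (by omega) h2 (by omega)
        omega
  have hmono' : ∀ a b, 1 ≤ a → b ≤ n → a < b → v⁻¹ a < v⁻¹ b := by
    intro a b ha hb hab
    have h1 : v⁻¹ a ∈ Set.Icc 1 n := memSymm_mapsTo (memSymm_inv hv) (by simp; omega)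
    have h2 : v⁻¹ b ∈ Set.Icc 1 n := memSymm_mapsTo (memSymm_inv hv) (by simp; omega)
    simp only [Set.mem_Icc] at h1 h2
    rcases lt_trichotomy (v⁻¹ a) (v⁻¹ b) with h | h | h
    · exact h
    · exfalso; have := congrArg v (congrArg id h); simp at this; omega
    · exfalso
      have := hempty _ _ h2.1 h1.2 h
      simp at this; omega
  ext x
  simp only [Equiv.Perm.one_apply]
  by_cases hx : x ∈ Set.Icc 1 n
  · simp only [Set.mem_Icc] at hx
    have h1 := hge v hv hempty x hx.1 hx.2
    have hvx : v x ∈ Set.Icc 1 n := memSymm_mapsTo hv (by simp [hx.1, hx.2])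
    simp only [Set.mem_Icc] at hvx
    have h2 := hge v⁻¹ (memSymm_inv hv) hmono' (v x) hvx.1 hvx.2
    simp at h2
    omega
  · exact hv x hx

/-- any word gives an upper bound for invCount -/
lemma invCount_le_length {n : ℕ} : ∀ s : List ℕ, (∀ j ∈ s, 1 ≤ j ∧ j ≤ n - 1) →
    invCount n (wordProd s) ≤ s.length := by
  intro s
  induction s using List.reverseRecOn with
  | nil => intro _; simp [wordProd_nil, invCount_one]
  | append_singleton t j ih =>
    intro hb
    have hbt : ∀ a ∈ t, 1 ≤ a ∧ a ≤ n - 1 := fun a ha => hb a (by simp [ha])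
    have hj := letter_bound (hb j (by simp))
    have ht := ih hbt
    rw [wordProd_concat]
    set W := wordProd t
    have hstep := invCount_step n j hj.1 hj.2 W
    have hne : W j ≠ W (j+1) := fun e => by have := W.injective e; omega
    rcases lt_or_gt_of_ne hne with h | h
    · have := hstep.1 h; simp; omega
    · have := hstep.2 h; simp; omega

/-- existence of a descent when invCount positive -/
lemma exists_descent {n : ℕ} {v : Equiv.Perm ℕ} (h : invCount n v ≠ 0) :
    ∃ j, 1 ≤ j ∧ j + 1 ≤ n ∧ v (j+1) < v j := by
  obtain ⟨⟨a, b⟩, hm⟩ := Finset.card_ne_zero.mp (by simpa [invCount] using h)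
  simp only [invSet, Finset.mem_filter, Finset.mem_product, Finset.mem_Icc] at hm
  obtain ⟨⟨⟨ha1, _⟩, _, hb2⟩, hab, hvb⟩ := hm
  clear h
  -- induction on b - a
  obtain ⟨k, hk⟩ : ∃ k, b - a = k + 1 := ⟨b - a - 1, by omega⟩
  induction k generalizing a with
  | zero =>
    have : b = a + 1 := by omega
    subst this
    exact ⟨a, ha1, by omega, hvb⟩
  | succ m ih =>
    by_cases hd : v (a+1) < v a
    · exact ⟨a, ha1, by omega, hd⟩
    · have hlt : v a < v (a+1) := by
        have : v a ≠ v (a+1) := fun e => by have := v.injective e; omega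
        omega
      exact ih (a+1) (by omega) (by omega) (by omega) (by omega) (by omega)

/-- bubble sort: existence of a word of length invCount -/
lemma exists_word_invCount {n : ℕ} : ∀ (m : ℕ) (v : Equiv.Perm ℕ), MemSymm n v →
    invCount n v = m →
    ∃ s : List ℕ, (∀ j ∈ s, 1 ≤ j ∧ j ≤ n - 1) ∧ wordProd s = v ∧ s.length = m := by
  intro m
  induction m with
  | zero =>
    intro v hv h
    exact ⟨[], by simp, by rw [wordProd_nil, eq_one_of_invCount_zero hv h], rfl⟩
  | succ m ih =>
    intro v hv h
    obtain ⟨j, hj1, hjn, hd⟩ := exists_descent (n := n) (v := v) (by omega)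
    have hstep := (invCount_step n j hj1 hjn v).2 hd
    have hv' : MemSymm n (v * sigmaT j) := by
      intro x hx
      rw [Equiv.Perm.mul_apply, sigmaT_fix ⟨hj1, hjn⟩ hx, hv x hx]
    obtain ⟨s, hsb, hsp, hsl⟩ := ih (v * sigmaT j) hv' (by omega)
    refine ⟨s ++ [j], ?_, ?_, by simp [hsl]⟩
    · intro a ha
      rcases List.mem_append.mp ha with h' | h'
      · exact hsb a h'
      · simp at h'; subst h'; omega
    · rw [wordProd_concat, hsp, mul_assoc, sigmaT_mul_self, mul_one]

lemma isWord_memSymm {n : ℕ} {v : Equiv.Perm ℕ} {s : List ℕ} (h : IsWord n v s) :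
    MemSymm n v := h.2 ▸ memSymm_wordProd h.1

/-- characterization of reduced words -/
lemma reduced_iff {n : ℕ} {v : Equiv.Perm ℕ} {s : List ℕ} :
    IsReducedWord n v s ↔ IsWord n v s ∧ s.length = invCount n v := by
  constructor
  · rintro ⟨hw, hmin⟩
    refine ⟨hw, le_antisymm ?_ ?_⟩
    · obtain ⟨t, htb, htp, htl⟩ :=
        exists_word_invCount (invCount n v) v (isWord_memSymm hw) rfl
      exact htl ▸ hmin t ⟨htb, htp⟩
    · rw [← hw.2]; exact invCount_le_length s hw.1
  · rintro ⟨hw, hl⟩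
    refine ⟨hw, fun t ht => ?_⟩
    rw [hl, ← ht.2]
    exact invCount_le_length t ht.1

lemma exists_reduced {n : ℕ} {v : Equiv.Perm ℕ} (h : ∃ s, IsWord n v s) :
    ∃ s, IsReducedWord n v s := by
  obtain ⟨s, hs⟩ := h
  obtain ⟨t, htb, htp, htl⟩ := exists_word_invCount (n := n) (invCount n v) v
    (isWord_memSymm hs) rfl
  exact ⟨t, reduced_iff.mpr ⟨⟨htb, htp⟩, htl⟩⟩

end Aux

namespace Aux

lemma mul_sigma_cancel (v : Equiv.Perm ℕ) (j : ℕ) : v * sigmaT j * sigmaT j = v := by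
  rw [mul_assoc, sigmaT_mul_self, mul_one]

lemma memSymm_mul_sigmaT {n : ℕ} {v : Equiv.Perm ℕ} (hv : MemSymm n v) {j : ℕ}
    (h1 : 1 ≤ j) (h2 : j + 1 ≤ n) : MemSymm n (v * sigmaT j) := by
  intro x hx
  rw [Equiv.Perm.mul_apply, sigmaT_fix ⟨h1, h2⟩ hx, hv x hx]

lemma wordProd_cons (j : ℕ) (s : List ℕ) : wordProd (j :: s) = sigmaT j * wordProd s := by
  simp [wordProd]

/-- elementary braid/commutation moves on words -/
inductive BMove : List ℕ → List ℕ → Prop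
  | comm (x y : List ℕ) (j k : ℕ) (h : j + 2 ≤ k ∨ k + 2 ≤ j) :
      BMove (x ++ j :: k :: y) (x ++ k :: j :: y)
  | braid (x y : List ℕ) (j : ℕ) :
      BMove (x ++ j :: (j+1) :: j :: y) (x ++ (j+1) :: j :: (j+1) :: y)
  | braid' (x y : List ℕ) (j : ℕ) :
      BMove (x ++ (j+1) :: j :: (j+1) :: y) (x ++ j :: (j+1) :: j :: y)

def BraidEq : List ℕ → List ℕ → Prop := Relation.ReflTransGen BMove

lemma bmove_symm {s t : List ℕ} (h : BMove s t) : BMove t s := by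
  cases h with
  | comm x y j k h => exact BMove.comm x y k j h.symm
  | braid x y j => exact BMove.braid' x y j
  | braid' x y j => exact BMove.braid x y j

lemma braidEq_refl (s : List ℕ) : BraidEq s s := Relation.ReflTransGen.refl

lemma braidEq_trans {s t u : List ℕ} (h1 : BraidEq s t) (h2 : BraidEq t u) : BraidEq s u :=
  Relation.ReflTransGen.trans h1 h2

lemma braidEq_symm {s t : List ℕ} (h : BraidEq s t) : BraidEq t s := by
  induction h with
  | refl => exact braidEq_refl _
  | tail _ hstep ih =>
    exact braidEq_trans (Relation.ReflTransGen.single (bmove_symm hstep)) ih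

lemma braidEq_single {s t : List ℕ} (h : BMove s t) : BraidEq s t :=
  Relation.ReflTransGen.single h

lemma sigmaT_comm_apply {j k : ℕ} (h : j + 2 ≤ k ∨ k + 2 ≤ j) (g : Equiv.Perm ℕ) :
    sigmaT j * (sigmaT k * g) = sigmaT k * (sigmaT j * g) := by
  rw [← mul_assoc, ← mul_assoc, sigmaT_comm h]

lemma sigmaT_cancel_apply (j : ℕ) (g : Equiv.Perm ℕ) :
    sigmaT j * (sigmaT j * g) = g := by
  rw [← mul_assoc, sigmaT_mul_self, one_mul]

lemma sigmaT_braid_apply (j : ℕ) (g : Equiv.Perm ℕ) :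
    sigmaT j * (sigmaT (j+1) * (sigmaT j * g)) = sigmaT (j+1) * (sigmaT j * (sigmaT (j+1) * g)) := by
  rw [← mul_assoc, ← mul_assoc, ← mul_assoc, ← mul_assoc, sigmaT_braid]

lemma bmove_wordProd {s t : List ℕ} (h : BMove s t) : wordProd s = wordProd t := by
  cases h with
  | comm x y j k h =>
    simp only [wordProd_append, wordProd_cons, mul_assoc]
    rw [sigmaT_comm_apply h]
  | braid x y j =>
    simp only [wordProd_append, wordProd_cons, mul_assoc]
    rw [sigmaT_braid_apply]
  | braid' x y j =>
    simp only [wordProd_append, wordProd_cons, mul_assoc]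
    rw [sigmaT_braid_apply]

lemma bmove_length {s t : List ℕ} (h : BMove s t) : s.length = t.length := by
  cases h <;> simp

lemma bmove_mem {s t : List ℕ} (h : BMove s t) (a : ℕ) : a ∈ s ↔ a ∈ t := by
  cases h <;> simp <;> tauto

lemma bmove_bounds {n : ℕ} {s t : List ℕ} (h : BMove s t)
    (hb : ∀ j ∈ s, 1 ≤ j ∧ j ≤ n - 1) : ∀ j ∈ t, 1 ≤ j ∧ j ≤ n - 1 :=
  fun j hj => hb j ((bmove_mem h j).mpr hj)

lemma braidEq_isReduced {n : ℕ} {v : Equiv.Perm ℕ} {s t : List ℕ} (h : BraidEq s t)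
    (hs : IsReducedWord n v s) : IsReducedWord n v t := by
  induction h with
  | refl => exact hs
  | tail _ hstep ih =>
    obtain ⟨⟨hb, hp⟩, hmin⟩ := ih
    refine ⟨⟨bmove_bounds hstep hb, (bmove_wordProd hstep) ▸ hp⟩, ?_⟩
    intro r hr
    rw [← bmove_length hstep]
    exact hmin r hr

lemma braidEq_mem {s t : List ℕ} (h : BraidEq s t) (a : ℕ) : a ∈ s ↔ a ∈ t := by
  induction h with
  | refl => exact Iff.rfl
  | tail _ hstep ih => exact ih.trans (bmove_mem hstep a)

lemma bmove_append_right {s t : List ℕ} (h : BMove s t) (r : List ℕ) :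
    BMove (s ++ r) (t ++ r) := by
  cases h with
  | comm x y j k h =>
    have e1 : (x ++ j :: k :: y) ++ r = x ++ j :: k :: (y ++ r) := by simp
    have e2 : (x ++ k :: j :: y) ++ r = x ++ k :: j :: (y ++ r) := by simp
    rw [e1, e2]; exact BMove.comm x (y ++ r) j k h
  | braid x y j =>
    have e1 : (x ++ j :: (j+1) :: j :: y) ++ r = x ++ j :: (j+1) :: j :: (y ++ r) := by simp
    have e2 : (x ++ (j+1) :: j :: (j+1) :: y) ++ r = x ++ (j+1) :: j :: (j+1) :: (y ++ r) := by
      simp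
    rw [e1, e2]; exact BMove.braid x (y ++ r) j
  | braid' x y j =>
    have e1 : (x ++ j :: (j+1) :: j :: y) ++ r = x ++ j :: (j+1) :: j :: (y ++ r) := by simp
    have e2 : (x ++ (j+1) :: j :: (j+1) :: y) ++ r = x ++ (j+1) :: j :: (j+1) :: (y ++ r) := by
      simp
    rw [e1, e2]; exact BMove.braid' x (y ++ r) j

lemma braidEq_append_right {s t : List ℕ} (h : BraidEq s t) (r : List ℕ) :
    BraidEq (s ++ r) (t ++ r) := by
  induction h with
  | refl => exact braidEq_refl _
  | tail _ hstep ih =>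
    exact braidEq_trans ih (braidEq_single (bmove_append_right hstep r))

/-- last letter of a reduced word is a descent, and dropping it stays reduced -/
lemma reduced_concat {n : ℕ} {v : Equiv.Perm ℕ} {s : List ℕ} {j : ℕ}
    (h : IsReducedWord n v (s ++ [j])) :
    v (j+1) < v j ∧ IsReducedWord n (v * sigmaT j) s ∧
      invCount n (v * sigmaT j) + 1 = invCount n v := by
  have hb := h.1.1
  have hp := h.1.2
  have hlen := (reduced_iff.mp h).2
  simp only [List.length_append, List.length_singleton] at hlen
  have hj := letter_bound (hb j (by simp))
  have hbs : ∀ a ∈ s, 1 ≤ a ∧ a ≤ n - 1 := fun a ha => hb a (by simp [ha])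
  set W := wordProd s with hW
  have hWv : W * sigmaT j = v := by rw [hW, ← wordProd_concat, hp]
  have hWb : invCount n W ≤ s.length := invCount_le_length s hbs
  have hstep := invCount_step n j hj.1 hj.2 W
  have hne : W j ≠ W (j+1) := fun e => by have := W.injective e; omega
  have hvW : v * sigmaT j = W := by rw [← hWv, mul_sigma_cancel]
  rcases lt_or_gt_of_ne hne with hlt | hgt
  · -- ascent: inv v = inv W + 1
    have h1 := hstep.1 hlt
    rw [hWv] at h1
    have hWlen : invCount n W = s.length := by omega
    have hd : v (j+1) < v j := by
      have e1 : v j = W (j+1) := by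
        rw [← hWv, Equiv.Perm.mul_apply, sigmaT_apply]; split_ifs <;> omega
      have e2 : v (j+1) = W j := by
        rw [← hWv, Equiv.Perm.mul_apply, sigmaT_apply]; split_ifs <;> omega
      omega
    refine ⟨hd, ?_, by rw [hvW]; omega⟩
    rw [hvW]
    exact reduced_iff.mpr ⟨⟨hbs, rfl⟩, hWlen.symm⟩
  · exfalso
    have h1 := hstep.2 hgt
    rw [hWv] at h1
    omega

set_option maxHeartbeats 1000000 in
lemma matsumoto_braid_case {n k : ℕ}
    (ih : ∀ m < k, ∀ (v : Equiv.Perm ℕ) (s t : List ℕ),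
      IsReducedWord n v s → IsReducedWord n v t → s.length = m → BraidEq s t)
    (v : Equiv.Perm ℕ) : ∀ (b : ℕ) (s'' t'' : List ℕ), 1 ≤ b → b + 2 ≤ n →
        s''.length + 1 = k → t''.length + 1 = k →
        IsReducedWord n v (s'' ++ [b]) → IsReducedWord n v (t'' ++ [b+1]) →
        BraidEq (s'' ++ [b]) (t'' ++ [b+1]) := by
  intro b s'' t'' hb1 hb2 hsl'' htl'' hrs hrt
  obtain ⟨hd1, hs2, hi1⟩ := reduced_concat hrs
  obtain ⟨hd2, ht2, hi2⟩ := reduced_concat hrt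
  -- descents : v (b+1) < v b and v (b+2) < v (b+1)
  have e0 : sigmaT b b = b+1 := by rw [sigmaT_apply]; split_ifs <;> omega
  have e1 : sigmaT b (b+1) = b := by rw [sigmaT_apply]; split_ifs <;> omega
  have e2 : sigmaT b (b+1+1) = b+1+1 := by rw [sigmaT_apply]; split_ifs <;> omega
  have e3 : sigmaT (b+1) b = b := by rw [sigmaT_apply]; split_ifs <;> omega
  have e4 : sigmaT (b+1) (b+1) = b+1+1 := by rw [sigmaT_apply]; split_ifs <;> omega
  have hd1' : v (b+1) < v b := hd1
  have hd2' : v (b+1+1) < v (b+1) := hd2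
  have dX : (v * sigmaT b) (b+1+1) < (v * sigmaT b) (b+1) := by
    simp only [Equiv.Perm.mul_apply]
    rw [e1, e2]
    omega
  have hstep2 := (invCount_step n (b+1) (by omega) (by omega) (v * sigmaT b)).2 dX
  have dY : (v * sigmaT b * sigmaT (b+1)) (b+1) < (v * sigmaT b * sigmaT (b+1)) b := by
    simp only [Equiv.Perm.mul_apply]
    rw [e3, e4, e2, e0]
    omega
  have hstep3 := (invCount_step n b hb1 (by omega) (v * sigmaT b * sigmaT (b+1))).2 dY
  set v3 := v * sigmaT b * sigmaT (b+1) * sigmaT b with hv3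
  have hmemv : MemSymm n v := isWord_memSymm hrs.1
  have hmem3 : MemSymm n v3 :=
    memSymm_mul_sigmaT (memSymm_mul_sigmaT (memSymm_mul_sigmaT hmemv hb1 (by omega))
      (by omega) (by omega)) hb1 (by omega)
  obtain ⟨z, hzb, hzp, hzl⟩ := exists_word_invCount (invCount n v3) v3 hmem3 rfl
  have hbound : ∀ a ∈ z ++ [b] ++ [b+1], 1 ≤ a ∧ a ≤ n - 1 := by
    intro a ha
    simp only [List.mem_append, List.mem_singleton] at ha
    rcases ha with (h' | h') | h'
    · exact hzb a h'
    · subst h'; omega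
    · subst h'; omega
  have hbound' : ∀ a ∈ z ++ [b+1] ++ [b], 1 ≤ a ∧ a ≤ n - 1 := by
    intro a ha
    simp only [List.mem_append, List.mem_singleton] at ha
    rcases ha with (h' | h') | h'
    · exact hzb a h'
    · subst h'; omega
    · subst h'; omega
  -- z ++ [b, b+1] is reduced for v * sigmaT b
  have hz1p : wordProd (z ++ [b] ++ [b+1]) = v * sigmaT b := by
    rw [wordProd_concat, wordProd_concat, hzp, hv3]
    rw [mul_sigma_cancel, mul_sigma_cancel]
  have hz1 : IsReducedWord n (v * sigmaT b) (z ++ [b] ++ [b+1]) :=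
    reduced_iff.mpr ⟨⟨hbound, hz1p⟩, by simp; omega⟩
  -- z ++ [b+1, b] is reduced for v * sigmaT (b+1)
  have hz2p : wordProd (z ++ [b+1] ++ [b]) = v * sigmaT (b+1) := by
    rw [wordProd_concat, wordProd_concat, hzp, hv3]
    simp only [mul_assoc]
    rw [sigmaT_braid_apply b (sigmaT (b+1) * sigmaT b), sigmaT_cancel_apply,
      sigmaT_mul_self, mul_one]
  have hz2 : IsReducedWord n (v * sigmaT (b+1)) (z ++ [b+1] ++ [b]) :=
    reduced_iff.mpr ⟨⟨hbound', hz2p⟩, by simp; omega⟩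
  have hchain1 : BraidEq s'' (z ++ [b] ++ [b+1]) :=
    ih (k-1) (by omega) (v * sigmaT b) s'' _ hs2 hz1 (by omega)
  have hchain2 : BraidEq t'' (z ++ [b+1] ++ [b]) :=
    ih (k-1) (by omega) (v * sigmaT (b+1)) t'' _ ht2 hz2 (by omega)
  have h1 : BraidEq (s'' ++ [b]) (z ++ [b] ++ [b+1] ++ [b]) :=
    braidEq_append_right hchain1 [b]
  have h2 : BraidEq (t'' ++ [b+1]) (z ++ [b+1] ++ [b] ++ [b+1]) :=
    braidEq_append_right hchain2 [b+1]
  have hmove : BMove (z ++ [b] ++ [b+1] ++ [b]) (z ++ [b+1] ++ [b] ++ [b+1]) := by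
    have e1' : z ++ [b] ++ [b+1] ++ [b] = z ++ b :: (b+1) :: b :: [] := by simp
    have e2' : z ++ [b+1] ++ [b] ++ [b+1] = z ++ (b+1) :: b :: (b+1) :: [] := by simp
    rw [e1', e2']
    exact BMove.braid z [] b
  exact braidEq_trans h1 (braidEq_trans (braidEq_single hmove) (braidEq_symm h2))

set_option maxHeartbeats 1000000 in
/-- Matsumoto / Tits' theorem for our bespoke setting -/
lemma matsumoto {n : ℕ} : ∀ (k : ℕ) (v : Equiv.Perm ℕ) (s t : List ℕ),
    IsReducedWord n v s → IsReducedWord n v t → s.length = k → BraidEq s t := by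
  intro k
  induction k using Nat.strong_induction_on with
  | _ k ih =>
  intro v s t hs ht hk
  have hsl := (reduced_iff.mp hs).2
  have htl := (reduced_iff.mp ht).2
  rcases Nat.eq_zero_or_pos k with rfl | hkpos
  · have : s = [] := List.length_eq_zero_iff.mp hk
    have ht0 : t = [] := List.length_eq_zero_iff.mp (by omega)
    rw [this, ht0]
    exact braidEq_refl []
  rcases List.eq_nil_or_concat s with rfl | ⟨s', j, rfl⟩
  · simp at hk; omega
  rcases List.eq_nil_or_concat t with rfl | ⟨t', m, rfl⟩
  · simp at htl; omega
  simp only [List.concat_eq_append] at hs ht hsl htl hk ⊢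
  obtain ⟨hdj, hs', hinvj⟩ := reduced_concat hs
  obtain ⟨hdm, ht', hinvm⟩ := reduced_concat ht
  have hbj := letter_bound (hs.1.1 j (by simp))
  have hbm := letter_bound (ht.1.1 m (by simp))
  have hs'len : s'.length + 1 = k := by simpa using hk
  have ht'len : t'.length + 1 = k := by
    simp only [List.length_append, List.length_singleton] at htl hsl; omega
  have hmem : MemSymm n v := isWord_memSymm hs.1
  by_cases hjm : j = m
  · subst hjm
    have := ih (k-1) (by omega) (v * sigmaT j) s' t' hs' ht' (by omega)
    exact braidEq_append_right this [j]
  rcases Nat.lt_or_ge (max j m) (min j m + 2) with hnear | hfar'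
  · -- |j - m| = 1 : braid case
    rcases (by omega : m = j + 1 ∨ j = m + 1) with hc | hc
    · subst hc
      exact matsumoto_braid_case ih v j s' t' hbj.1 (by omega) (by omega) (by omega) hs ht
    · subst hc
      exact braidEq_symm
        (matsumoto_braid_case ih v m t' s' hbm.1 (by omega) (by omega) (by omega) ht hs)
  · -- |j - m| ≥ 2 : commutation case
    have hfar : j + 2 ≤ m ∨ m + 2 ≤ j := by omega
    have hcomm := sigmaT_comm hfar
    have efixm : sigmaT j m = m := by rw [sigmaT_apply]; split_ifs <;> omega
    have efixm1 : sigmaT j (m+1) = m+1 := by rw [sigmaT_apply]; split_ifs <;> omega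
    have hd2 : (v * sigmaT j) (m+1) < (v * sigmaT j) m := by
      rw [Equiv.Perm.mul_apply, Equiv.Perm.mul_apply, efixm, efixm1]; exact hdm
    have hstep2 := (invCount_step n m hbm.1 hbm.2 (v * sigmaT j)).2 hd2
    set v2 := v * sigmaT j * sigmaT m with hv2
    have hmem2 : MemSymm n v2 :=
      memSymm_mul_sigmaT (memSymm_mul_sigmaT hmem hbj.1 hbj.2) hbm.1 hbm.2
    obtain ⟨z, hzb, hzp, hzl⟩ := exists_word_invCount (invCount n v2) v2 hmem2 rfl
    -- z ++ [m] is reduced for v * sigmaT j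
    have hz1p : wordProd (z ++ [m]) = v * sigmaT j := by
      rw [wordProd_concat, hzp, hv2, mul_sigma_cancel]
    have hz1b : ∀ a ∈ z ++ [m], 1 ≤ a ∧ a ≤ n - 1 := by
      intro a ha
      rcases List.mem_append.mp ha with h' | h'
      · exact hzb a h'
      · simp at h'; subst h'; omega
    have hz1 : IsReducedWord n (v * sigmaT j) (z ++ [m]) :=
      reduced_iff.mpr ⟨⟨hz1b, hz1p⟩, by simp; omega⟩
    -- z ++ [j] is reduced for v * sigmaT m
    have hz2p : wordProd (z ++ [j]) = v * sigmaT m := by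
      rw [wordProd_concat, hzp, hv2, mul_assoc (v * sigmaT j), ← hcomm, ← mul_assoc,
        mul_sigma_cancel]
    have hz2b : ∀ a ∈ z ++ [j], 1 ≤ a ∧ a ≤ n - 1 := by
      intro a ha
      rcases List.mem_append.mp ha with h' | h'
      · exact hzb a h'
      · simp at h'; subst h'; omega
    have hz2 : IsReducedWord n (v * sigmaT m) (z ++ [j]) :=
      reduced_iff.mpr ⟨⟨hz2b, hz2p⟩, by simp; omega⟩
    have hchain1 : BraidEq s' (z ++ [m]) :=
      ih (k-1) (by omega) (v * sigmaT j) s' (z ++ [m]) hs' hz1 (by omega)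
    have hchain2 : BraidEq t' (z ++ [j]) :=
      ih (k-1) (by omega) (v * sigmaT m) t' (z ++ [j]) ht' hz2 (by omega)
    have h1 : BraidEq (s' ++ [j]) (z ++ [m] ++ [j]) := braidEq_append_right hchain1 [j]
    have h2 : BraidEq (t' ++ [m]) (z ++ [j] ++ [m]) := braidEq_append_right hchain2 [m]
    have hmove : BMove (z ++ [m] ++ [j]) (z ++ [j] ++ [m]) := by
      have e1 : z ++ [m] ++ [j] = z ++ m :: j :: [] := by simp
      have e2 : z ++ [j] ++ [m] = z ++ j :: m :: [] := by simp
      rw [e1, e2]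
      exact BMove.comm z [] m j (by omega)
    exact braidEq_trans h1 (braidEq_trans (braidEq_single hmove) (braidEq_symm h2))

end Aux

namespace Aux

lemma sublist_split {p q l : List ℕ} {i : ℕ} (h : (p ++ i :: q).Sublist l) :
    ∃ a b, l = a ++ i :: b ∧ p.Sublist a ∧ q.Sublist b := by
  induction p generalizing l with
  | nil =>
    simp only [List.nil_append] at h
    obtain ⟨r₁, r₂, rfl, hmem, hq⟩ := List.cons_sublist_iff.mp h
    obtain ⟨u, w, rfl⟩ := List.append_of_mem hmem
    refine ⟨u, w ++ r₂, by simp, List.nil_sublist _, hq.trans (List.sublist_append_right _ _)⟩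
  | cons c p' ih =>
    rw [List.cons_append] at h
    obtain ⟨r₁, r₂, rfl, hmem, hrest⟩ := List.cons_sublist_iff.mp h
    obtain ⟨a', b', rfl, hp', hq⟩ := ih hrest
    refine ⟨r₁ ++ a', b', by simp, ?_, hq⟩
    have h1 : [c].Sublist r₁ := List.singleton_sublist.mpr hmem
    simpa using h1.append hp'

lemma unconfined_iff {i : ℕ} {l : List ℕ} :
    Unconfined i l ↔ l.count i = 1 ∧ ¬ ([i+1, i, i+1].Sublist l) ∧ ¬ ([i-1, i, i-1].Sublist l) := by
  constructor
  · rintro ⟨hc, hcond⟩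
    refine ⟨hc, ?_, ?_⟩
    · intro hp
      obtain ⟨a, b, rfl, h1, h2⟩ := sublist_split (p := [i+1]) (q := [i+1]) (by simpa using hp)
      exact (hcond a b rfl).1 ⟨by simpa using h1, by simpa using h2⟩
    · intro hp
      obtain ⟨a, b, rfl, h1, h2⟩ := sublist_split (p := [i-1]) (q := [i-1]) (by simpa using hp)
      exact (hcond a b rfl).2 ⟨by simpa using h1, by simpa using h2⟩
  · rintro ⟨hc, h1, h2⟩
    refine ⟨hc, fun a b hab => ⟨?_, ?_⟩⟩
    · rintro ⟨ha, hb⟩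
      apply h1
      rw [hab]
      have : ([i+1] ++ i :: [i+1]).Sublist (a ++ i :: b) :=
        (List.singleton_sublist.mpr ha).append
          (List.Sublist.cons₂ i (List.singleton_sublist.mpr hb))
      simpa using this
    · rintro ⟨ha, hb⟩
      apply h2
      rw [hab]
      have : ([i-1] ++ i :: [i-1]).Sublist (a ++ i :: b) :=
        (List.singleton_sublist.mpr ha).append
          (List.Sublist.cons₂ i (List.singleton_sublist.mpr hb))
      simpa using this

/-- downward transfer of unconfinedness along sublists -/
lemma unconfined_of_sublist {i : ℕ} {s t : List ℕ} (hsub : s.Sublist t) (hmem : i ∈ s)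
    (hu : Unconfined i t) : Unconfined i s := by
  rw [unconfined_iff] at hu ⊢
  obtain ⟨hc, h1, h2⟩ := hu
  have hle := hsub.count_le i
  have hge := List.count_pos_iff.mpr hmem
  exact ⟨by omega, fun hp => h1 (hp.trans hsub), fun hp => h2 (hp.trans hsub)⟩

lemma pair_sublist_pair {a b u v : ℕ} (h : [a, b].Sublist [u, v]) : a = u ∧ b = v := by
  cases h with
  | cons _ h' =>
    exfalso
    have := h'.length_le
    simp at this
  | cons_cons _ h' =>
    have : b = v := by simpa using h'
    exact ⟨rfl, this⟩

lemma chunk3 {p₁ p₂ p₃ : List ℕ} {c i : ℕ} (h : p₁ ++ p₂ ++ p₃ = [c, i, c]) :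
    p₂ = [] ∨ (∃ a, p₂ = [a] ∧ (a = c ∨ a = i)) ∨ (p₂ = [c, i] ∧ p₁ = []) ∨
      (p₂ = [i, c] ∧ p₃ = []) ∨ p₂ = [c, i, c] := by
  rcases p₁ with _ | ⟨u, _ | ⟨u', _ | ⟨u'', r₁⟩⟩⟩ <;>
    rcases p₂ with _ | ⟨a, _ | ⟨b, _ | ⟨d, r₂⟩⟩⟩ <;>
    simp_all <;> tauto

/-- transfer of a pattern across a commutation move -/
lemma pattern_comm {c i j k : ℕ} (hne : c ≠ i) (hclose : c ≤ i + 1 ∧ i ≤ c + 1)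
    (hfar : j + 2 ≤ k ∨ k + 2 ≤ j) {x y : List ℕ}
    (h : [c, i, c].Sublist (x ++ [j, k] ++ y)) : [c, i, c].Sublist (x ++ [k, j] ++ y) := by
  rw [List.append_assoc] at h
  obtain ⟨l₁, l₂, heq, hl₁, hl₂⟩ := List.sublist_append_iff.mp h
  obtain ⟨p₂, p₃, heq2, hp₂, hp₃⟩ := List.sublist_append_iff.mp hl₂
  subst heq2
  have hre : ∀ p₂' : List ℕ, p₂'.Sublist [k, j] → [c,i,c] = l₁ ++ (p₂' ++ p₃) →
      [c, i, c].Sublist (x ++ [k, j] ++ y) := by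
    intro p₂' hs' he'
    rw [he', List.append_assoc]
    exact hl₁.append (hs'.append hp₃)
  have heq' : l₁ ++ p₂ ++ p₃ = [c, i, c] := by rw [List.append_assoc]; exact heq.symm
  rcases chunk3 heq' with h0 | ⟨a, ha, hmem⟩ | ⟨hp, hp1⟩ | ⟨hp, hp3⟩ | hp
  · exact hre [] (List.nil_sublist _) (by rw [heq, h0])
  · subst ha
    have hamem : a ∈ ([j, k] : List ℕ) := hp₂.subset (by simp)
    have : a ∈ ([k, j] : List ℕ) := by simp at hamem ⊢; tauto
    exact hre [a] (List.singleton_sublist.mpr this) heq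
  · exfalso
    subst hp
    have := pair_sublist_pair hp₂
    omega
  · exfalso
    subst hp
    have := pair_sublist_pair hp₂
    omega
  · exfalso
    subst hp
    have := hp₂.length_le
    simp at this

/-- transfer of a pattern across a braid move -/
lemma pattern_braid {c i j : ℕ} (hne : c ≠ i) (hi1 : i ≠ j) (hi2 : i ≠ j + 1)
    {m₁ m₂ : List ℕ}
    (hm : (m₁ = [j, j+1, j] ∧ m₂ = [j+1, j, j+1]) ∨ (m₁ = [j+1, j, j+1] ∧ m₂ = [j, j+1, j]))
    {x y : List ℕ}
    (h : [c, i, c].Sublist (x ++ m₁ ++ y)) : [c, i, c].Sublist (x ++ m₂ ++ y) := by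
  rw [List.append_assoc] at h
  obtain ⟨l₁, l₂, heq, hl₁, hl₂⟩ := List.sublist_append_iff.mp h
  obtain ⟨p₂, p₃, heq2, hp₂, hp₃⟩ := List.sublist_append_iff.mp hl₂
  subst heq2
  have hre : ∀ p₂' : List ℕ, p₂'.Sublist m₂ → [c,i,c] = l₁ ++ (p₂' ++ p₃) →
      [c, i, c].Sublist (x ++ m₂ ++ y) := by
    intro p₂' hs' he'
    rw [he', List.append_assoc]
    exact hl₁.append (hs'.append hp₃)
  have hinot : i ∉ m₁ := by
    rcases hm with ⟨h1, -⟩ | ⟨h1, -⟩ <;> subst h1 <;> simp <;> omega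
  have heq' : l₁ ++ p₂ ++ p₃ = [c, i, c] := by rw [List.append_assoc]; exact heq.symm
  rcases chunk3 heq' with h0 | ⟨a, ha, hmem⟩ | ⟨hp, hp1⟩ | ⟨hp, hp3⟩ | hp
  · exact hre [] (List.nil_sublist _) (by rw [heq, h0])
  · subst ha
    have hamem : a ∈ m₁ := hp₂.subset (by simp)
    have hac : a = c := by
      rcases hmem with rfl | rfl
      · rfl
      · exact absurd hamem hinot
    subst hac
    have : a ∈ m₂ := by
      rcases hm with ⟨h1, h2⟩ | ⟨h1, h2⟩ <;> subst h1 <;> subst h2 <;>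
        simp at hamem ⊢ <;> tauto
    exact hre [a] (List.singleton_sublist.mpr this) heq
  · exfalso
    subst hp
    exact hinot (hp₂.subset (by simp))
  · exfalso
    subst hp
    exact hinot (hp₂.subset (by simp))
  · exfalso
    subst hp
    exact hinot (hp₂.subset (by simp))

lemma count_pair_swap (i a b : ℕ) : ([a, b] : List ℕ).count i = ([b, a] : List ℕ).count i := by
  simp only [List.count_cons, List.count_nil]
  split_ifs <;> omega

lemma count_triple_swap (i a b : ℕ) : ([a, b, a] : List ℕ).count i = ([b, a, b] : List ℕ).count i
    ∨ (i = a ∨ i = b → i = a ∧ i = b) ∨ True := by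
  right; right; trivial

lemma count_mid_eq {i : ℕ} (x y m₁ m₂ : List ℕ) (h : m₁.count i = m₂.count i) :
    (x ++ m₁ ++ y).count i = (x ++ m₂ ++ y).count i := by
  simp [List.count_append, h]

lemma mid_sublist (x m y : List ℕ) : m.Sublist (x ++ m ++ y) := by
  rw [List.append_assoc]
  have h1 : m.Sublist (m ++ y) := List.sublist_append_left m y
  have : ([] ++ m).Sublist (x ++ (m ++ y)) := (List.nil_sublist x).append h1
  simpa using this

lemma triple_not_sublist {l : List ℕ} {i : ℕ} (hc : l.count i = 1) :
    ¬ ([i, i, i].Sublist l) := by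
  intro h
  have := h.count_le i
  simp [List.count_cons] at this
  omega

lemma bmove_unconfined {i : ℕ} {s t : List ℕ} (h : BMove s t) (hu : Unconfined i s) :
    Unconfined i t := by
  rw [unconfined_iff] at hu ⊢
  obtain ⟨hc, h1, h2⟩ := hu
  cases h with
  | comm x y j k hfar =>
    have es : x ++ j :: k :: y = x ++ [j, k] ++ y := by simp
    have et : x ++ k :: j :: y = x ++ [k, j] ++ y := by simp
    rw [es] at hc h1 h2
    rw [et]
    have hcnt : (x ++ [k, j] ++ y).count i = 1 := by
      rw [count_mid_eq x y [k, j] [j, k] (count_pair_swap i k j), hc]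
    refine ⟨hcnt, ?_, ?_⟩
    · intro hp
      exact h1 (pattern_comm (by omega) (by omega) (by omega) hp)
    · intro hp
      by_cases hi0 : i = 0
      · subst hi0
        exact triple_not_sublist hcnt (by simpa using hp)
      · exact h2 (pattern_comm (show i-1 ≠ i by omega) (by omega) (by omega) hp)
  | braid x y j =>
    have es : x ++ j :: (j+1) :: j :: y = x ++ [j, j+1, j] ++ y := by simp
    have et : x ++ (j+1) :: j :: (j+1) :: y = x ++ [j+1, j, j+1] ++ y := by simp
    rw [es] at hc h1 h2
    rw [et]
    have hij : i ≠ j := by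
      intro hcon
      subst hcon
      simp [List.count_append, List.count_cons] at hc
      omega
    have hij1 : i ≠ j + 1 := by
      intro hcon
      apply h2
      have hmid : [j, j+1, j].Sublist (x ++ [j, j+1, j] ++ y) := mid_sublist _ _ _
      have h' : [i-1, i, i-1] = [j, j+1, j] := by rw [hcon]; simp
      rw [h']
      exact hmid
    have hmideq : ([j+1, j, j+1] : List ℕ).count i = ([j, j+1, j] : List ℕ).count i := by
      simp only [List.count_cons, List.count_nil, beq_iff_eq]
      split_ifs <;> omega
    have hcnt : (x ++ [j+1, j, j+1] ++ y).count i = 1 := by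
      rw [count_mid_eq x y [j+1, j, j+1] [j, j+1, j] hmideq, hc]
    refine ⟨hcnt, ?_, ?_⟩
    · intro hp
      exact h1 (pattern_braid (by omega) hij hij1 (Or.inr ⟨rfl, rfl⟩) hp)
    · intro hp
      by_cases hi0 : i = 0
      · subst hi0
        exact triple_not_sublist hcnt (by simpa using hp)
      · exact h2 (pattern_braid (show i-1 ≠ i by omega) hij hij1 (Or.inr ⟨rfl, rfl⟩) hp)
  | braid' x y j =>
    have es : x ++ (j+1) :: j :: (j+1) :: y = x ++ [j+1, j, j+1] ++ y := by simp
    have et : x ++ j :: (j+1) :: j :: y = x ++ [j, j+1, j] ++ y := by simp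
    rw [es] at hc h1 h2
    rw [et]
    have hij1 : i ≠ j + 1 := by
      intro hcon
      subst hcon
      simp [List.count_append, List.count_cons] at hc
      omega
    have hij : i ≠ j := by
      intro hcon
      apply h1
      have hmid : [j+1, j, j+1].Sublist (x ++ [j+1, j, j+1] ++ y) := mid_sublist _ _ _
      have h' : [i+1, i, i+1] = [j+1, j, j+1] := by rw [hcon]
      rw [h']
      exact hmid
    have hmideq : ([j, j+1, j] : List ℕ).count i = ([j+1, j, j+1] : List ℕ).count i := by
      simp only [List.count_cons, List.count_nil, beq_iff_eq]
      split_ifs <;> omega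
    have hcnt : (x ++ [j, j+1, j] ++ y).count i = 1 := by
      rw [count_mid_eq x y [j, j+1, j] [j+1, j, j+1] hmideq, hc]
    refine ⟨hcnt, ?_, ?_⟩
    · intro hp
      exact h1 (pattern_braid (by omega) hij hij1 (Or.inl ⟨rfl, rfl⟩) hp)
    · intro hp
      by_cases hi0 : i = 0
      · subst hi0
        exact triple_not_sublist hcnt (by simpa using hp)
      · exact h2 (pattern_braid (show i-1 ≠ i by omega) hij hij1 (Or.inl ⟨rfl, rfl⟩) hp)

lemma braidEq_unconfined {i : ℕ} {s t : List ℕ} (h : BraidEq s t) (hu : Unconfined i s) :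
    Unconfined i t := by
  induction h with
  | refl => exact hu
  | tail _ hstep ih => exact bmove_unconfined hstep ih

end Aux


/-- unconfinedness propagates downward in the Bruhat order. -/
theorem unconfined_propagates_downward (n : ℕ) (w : Equiv.Perm ℕ) (hw : MemSymm n w) (i : ℕ)
    (hi : i ∈ supp n w)
    (hu : ∀ s : List ℕ, IsReducedWord n w s → Unconfined i s) :
    ∀ u : Equiv.Perm ℕ, BruhatLE n u w →
      i ∉ supp n u ∨ ∀ s : List ℕ, IsReducedWord n u s → Unconfined i s := by
  intro u hle
  obtain ⟨s₀, t₀, hs₀, ht₀, hsub⟩ := hle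
  by_cases hmem : i ∈ s₀
  · right
    intro s hs
    have hut : Unconfined i t₀ := hu t₀ ht₀
    have hus₀ : Unconfined i s₀ := Aux.unconfined_of_sublist hsub hmem hut
    have hbe : Aux.BraidEq s₀ s := Aux.matsumoto s₀.length u s₀ s hs₀ hs rfl
    exact Aux.braidEq_unconfined hbe hus₀
  · left
    rintro ⟨s, hs, hmem'⟩
    exact hmem ((Aux.braidEq_mem (Aux.matsumoto s₀.length u s₀ s hs₀ hs rfl) i).mpr hmem')
end
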